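/- arXiv:2508.13100 — 5 statements merged into one kernel-verified Lean document; each statement's English description precedes it below -/
import Mathlib

section
/- For every positive integer T, every prediction sequence r ∈ [0,1]^T, and every state sequence y ∈ {0,1}^T, the smooth calibration error is bounded by the ℓ1 averaged two-bin calibration error: smCal(r,y) ≤ (3/2) · ℓ1-ATB(r,y). -/
open MeasureTheory Finset

noncomputable section

/-- Averaged two-bin calibration error of predictions `r` w.r.t. states `y`:
the bin boundary `q` is uniform on `[0,1]`. -/
def atbSeq {T : ℕ} (r y : Fin T → ℝ) : ℝ :=
  ∫ q in (0:ℝ)..1, (1 / (T:ℝ)^2) *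
    ((∑ t, if r t < q then (r t - y t) else 0)^2 +
     (∑ t, if q ≤ r t then (r t - y t) else 0)^2)

/-- ℓ1 variant of the averaged two-bin calibration error on sequences. -/
def l1atbSeq {T : ℕ} (r y : Fin T → ℝ) : ℝ :=
  ∫ q in (0:ℝ)..1, (1 / (T:ℝ)) *
    (|∑ t, if r t < q then (r t - y t) else 0| +
     |∑ t, if q ≤ r t then (r t - y t) else 0|)

/-- Smooth calibration error on sequences: the supremum of `(1/T) ∑ (r t - y t) * w (r t)`
over 1-Lipschitz weight functions `w : [0,1] → [-1,1]`. -/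
def smCalSeq {T : ℕ} (r y : Fin T → ℝ) : ℝ :=
  sSup { c : ℝ | ∃ w : ℝ → ℝ, LipschitzOnWith 1 w (Set.Icc 0 1) ∧
    (∀ x ∈ Set.Icc (0:ℝ) 1, w x ∈ Set.Icc (-1:ℝ) 1) ∧
    c = (1 / (T:ℝ)) * ∑ t, (r t - y t) * w (r t) }


lemma intInt_ge {T : ℕ} (e ρ : Fin T → ℝ) (a b : ℝ) :
    IntervalIntegrable (fun q => ∑ t, if q ≤ ρ t then e t else 0) volume a b := by
  have h : ∀ t ∈ (univ : Finset (Fin T)),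
      IntervalIntegrable (fun q => if q ≤ ρ t then e t else 0) volume a b := by
    intro t _
    have : (fun q => if q ≤ ρ t then e t else 0) =
        (Set.Iic (ρ t)).indicator (fun _ => e t) := by
      funext q; simp [Set.indicator_apply]
    rw [this, intervalIntegrable_iff]
    exact (integrableOn_const measure_Ioc_lt_top.ne).indicator measurableSet_Iic
  have := IntervalIntegrable.sum univ h
  have hfun : (fun q => ∑ t, if q ≤ ρ t then e t else 0) = ∑ i, fun q => if q ≤ ρ i then e i else 0 := by
    funext q
    simp [Finset.sum_apply]
  rw [hfun]; exact this

lemma lip_bound {w : ℝ → ℝ} (hw : LipschitzOnWith 1 w (Set.Icc 0 1))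
    {x y : ℝ} (hx : x ∈ Set.Icc (0:ℝ) 1) (hy : y ∈ Set.Icc (0:ℝ) 1) :
    |w x - w y| ≤ |x - y| := by
  have := hw.dist_le_mul x hx y hy
  simpa [Real.dist_eq] using this

lemma keyGE {T : ℕ} (w : ℝ → ℝ) (hw : LipschitzOnWith 1 w (Set.Icc 0 1)) :
    ∀ (n : ℕ) (e ρ : Fin T → ℝ) (a : ℝ), a ∈ Set.Icc (0:ℝ) 1 →
      (∀ t, ρ t ∈ Set.Icc a 1) →
      ((Finset.univ.image ρ).filter (fun v => a < v)).card ≤ n →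
      |∑ t, e t * (w (ρ t) - w a)| ≤ ∫ q in a..1, |∑ t, if q ≤ ρ t then e t else 0| := by
  intro n
  induction n with
  | zero =>
    intro e ρ a ha hρ hcard
    have hF : ((Finset.univ.image ρ).filter (fun v => a < v)) = ∅ :=
      Finset.card_eq_zero.1 (Nat.le_zero.1 hcard)
    have hall : ∀ t, ρ t = a := by
      intro t
      by_contra h
      have h1 : a < ρ t := lt_of_le_of_ne (hρ t).1 (Ne.symm h)
      have : ρ t ∈ ((Finset.univ.image ρ).filter (fun v => a < v)) :=
        Finset.mem_filter.2 ⟨Finset.mem_image_of_mem ρ (Finset.mem_univ t), h1⟩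
      rw [hF] at this; simp at this
    have hL : ∑ t, e t * (w (ρ t) - w a) = 0 := by
      apply Finset.sum_eq_zero; intro t _; rw [hall t]; ring
    rw [hL, abs_zero]
    apply intervalIntegral.integral_nonneg ha.2
    intro u _; positivity
  | succ n ih =>
    intro e ρ a ha hρ hcard
    set F := ((Finset.univ.image ρ).filter (fun v => a < v)) with hFdef
    rcases Finset.eq_empty_or_nonempty F with hF | hF
    · -- same as base case
      have hall : ∀ t, ρ t = a := by
        intro t
        by_contra h
        have h1 : a < ρ t := lt_of_le_of_ne (hρ t).1 (Ne.symm h)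
        have : ρ t ∈ F :=
          Finset.mem_filter.2 ⟨Finset.mem_image_of_mem ρ (Finset.mem_univ t), h1⟩
        rw [hF] at this; simp at this
      have hL : ∑ t, e t * (w (ρ t) - w a) = 0 := by
        apply Finset.sum_eq_zero; intro t _; rw [hall t]; ring
      rw [hL, abs_zero]
      apply intervalIntegral.integral_nonneg ha.2
      intro u _; positivity
    · set v := F.min' hF with hvdef
      have hvF : v ∈ F := F.min'_mem hF
      obtain ⟨hvim, hav⟩ := Finset.mem_filter.1 hvF
      obtain ⟨t0, _, ht0⟩ := Finset.mem_image.1 hvim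
      have hv1 : v ≤ 1 := by rw [← ht0]; exact (hρ t0).2
      have hvmem : v ∈ Set.Icc (0:ℝ) 1 := ⟨le_trans ha.1 (le_of_lt hav), hv1⟩
      have hvle : ∀ t, a < ρ t → v ≤ ρ t := by
        intro t ht
        exact F.min'_le _
          (Finset.mem_filter.2 ⟨Finset.mem_image_of_mem ρ (Finset.mem_univ t), ht⟩)
      set e' : Fin T → ℝ := fun t => if ρ t ≤ a then 0 else e t with he'
      set ρ' : Fin T → ℝ := fun t => if ρ t ≤ a then v else ρ t with hρ'
      have hρ'mem : ∀ t, ρ' t ∈ Set.Icc v 1 := by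
        intro t
        simp only [hρ']
        split_ifs with h
        · exact ⟨le_refl v, hv1⟩
        · exact ⟨hvle t (lt_of_not_ge h), (hρ t).2⟩
      -- card decrease
      have hcard' : ((Finset.univ.image ρ').filter (fun u => v < u)).card ≤ n := by
        have hsub : ((Finset.univ.image ρ').filter (fun u => v < u)) ⊆ F.erase v := by
          intro u hu
          obtain ⟨huim, hvu⟩ := Finset.mem_filter.1 hu
          obtain ⟨t, _, htu⟩ := Finset.mem_image.1 huim
          have : u = ρ t := by
            by_cases h : ρ t ≤ a
            · exfalso; rw [← htu] at hvu; simp only [hρ'] at hvu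
              rw [if_pos h] at hvu; exact lt_irrefl v hvu
            · rw [← htu]; simp only [hρ']; rw [if_neg h]
          rw [Finset.mem_erase]
          constructor
          · exact ne_of_gt hvu
          · rw [Finset.mem_filter]
            constructor
            · rw [this]; exact Finset.mem_image_of_mem ρ (Finset.mem_univ t)
            · exact lt_trans hav hvu
        calc ((Finset.univ.image ρ').filter (fun u => v < u)).card
            ≤ (F.erase v).card := Finset.card_le_card hsub
          _ = F.card - 1 := Finset.card_erase_of_mem hvF
          _ ≤ n := by omega
      have hIH := ih e' ρ' v hvmem hρ'mem hcard'
      -- decomposition of the sum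
      have hsplit : ∑ t, e t * (w (ρ t) - w a) =
          (∑ t, e' t * (w (ρ' t) - w v)) + (w v - w a) * ∑ t, e' t := by
        rw [Finset.mul_sum, ← Finset.sum_add_distrib]
        apply Finset.sum_congr rfl
        intro t _
        simp only [he', hρ']
        split_ifs with h
        · have : ρ t = a := le_antisymm h (hρ t).1
          rw [this]; ring
        · ring
      -- integral equalities
      have havle : a ≤ v := le_of_lt hav
      have hInt1 : (∫ q in a..v, |∑ t, if q ≤ ρ t then e t else 0|)
          = (v - a) * |∑ t, e' t| := by
        have : (∫ q in a..v, |∑ t, if q ≤ ρ t then e t else 0|)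
            = ∫ q in a..v, |∑ t, e' t| := by
          apply intervalIntegral.integral_congr_ae
          apply MeasureTheory.ae_of_all
          intro q hq
          rw [Set.uIoc_of_le havle] at hq
          show |∑ t, if q ≤ ρ t then e t else 0| = |∑ t, e' t|
          congr 1
          apply Finset.sum_congr rfl
          intro t _
          simp only [he']
          by_cases h : ρ t ≤ a
          · rw [if_pos h, if_neg (by intro hqρ; exact absurd (le_trans hqρ h) (not_le.2 hq.1))]
          · rw [if_neg h, if_pos (le_trans hq.2 (hvle t (lt_of_not_ge h)))]
        rw [this, intervalIntegral.integral_const, smul_eq_mul]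
      have hInt2 : (∫ q in v..1, |∑ t, if q ≤ ρ' t then e' t else 0|)
          = ∫ q in v..1, |∑ t, if q ≤ ρ t then e t else 0| := by
        apply intervalIntegral.integral_congr
        intro q hq
        rw [Set.uIcc_of_le hv1] at hq
        show |∑ t, if q ≤ ρ' t then e' t else 0| = |∑ t, if q ≤ ρ t then e t else 0|
        congr 1
        apply Finset.sum_congr rfl
        intro t _
        simp only [he', hρ']
        by_cases h : ρ t ≤ a
        · have hnq : ¬ q ≤ ρ t := by push_neg; linarith [hq.1]
          rw [if_pos h, if_pos h, ite_self, if_neg hnq]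
        · rw [if_neg h, if_neg h]
      have hadd : (∫ q in a..1, |∑ t, if q ≤ ρ t then e t else 0|)
          = (∫ q in a..v, |∑ t, if q ≤ ρ t then e t else 0|)
            + ∫ q in v..1, |∑ t, if q ≤ ρ t then e t else 0| := by
        rw [intervalIntegral.integral_add_adjacent_intervals
          ((intInt_ge e ρ a v).abs) ((intInt_ge e ρ v 1).abs)]
      have hlip : |w v - w a| ≤ v - a := by
        have := lip_bound hw hvmem ha
        rwa [abs_of_nonneg (by linarith : (0:ℝ) ≤ v - a)] at this
      calc |∑ t, e t * (w (ρ t) - w a)|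
          ≤ |∑ t, e' t * (w (ρ' t) - w v)| + |w v - w a| * |∑ t, e' t| := by
            rw [hsplit]; refine le_trans (abs_add_le _ _) ?_
            rw [abs_mul]
        _ ≤ (∫ q in v..1, |∑ t, if q ≤ ρ' t then e' t else 0|)
            + (v - a) * |∑ t, e' t| := by
            apply add_le_add hIH
            apply mul_le_mul_of_nonneg_right hlip (abs_nonneg _)
        _ = ∫ q in a..1, |∑ t, if q ≤ ρ t then e t else 0| := by
            rw [hInt2, hadd, hInt1]; ring


lemma intInt_lt' {T : ℕ} (e ρ : Fin T → ℝ) (a b : ℝ) :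
    IntervalIntegrable (fun q => ∑ t, if ρ t < q then e t else 0) volume a b := by
  have h : ∀ t ∈ (univ : Finset (Fin T)),
      IntervalIntegrable (fun q => if ρ t < q then e t else 0) volume a b := by
    intro t _
    have : (fun q => if ρ t < q then e t else 0) =
        (Set.Ioi (ρ t)).indicator (fun _ => e t) := by
      funext q; simp [Set.indicator_apply]
    rw [this, intervalIntegrable_iff]
    exact (integrableOn_const measure_Ioc_lt_top.ne).indicator measurableSet_Ioi
  have := IntervalIntegrable.sum univ h
  have hfun : (fun q => ∑ t, if ρ t < q then e t else 0) = ∑ i, fun q => if ρ i < q then e i else 0 := by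
    funext q
    simp [Finset.sum_apply]
  rw [hfun]; exact this

lemma lip_bound' {w : ℝ → ℝ} (hw : LipschitzOnWith 1 w (Set.Icc 0 1))
    {x y : ℝ} (hx : x ∈ Set.Icc (0:ℝ) 1) (hy : y ∈ Set.Icc (0:ℝ) 1) :
    |w x - w y| ≤ |x - y| := by
  have := hw.dist_le_mul x hx y hy
  simpa [Real.dist_eq] using this

lemma keyLT {T : ℕ} (w : ℝ → ℝ) (hw : LipschitzOnWith 1 w (Set.Icc 0 1)) :
    ∀ (n : ℕ) (e ρ : Fin T → ℝ) (b : ℝ), b ∈ Set.Icc (0:ℝ) 1 →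
      (∀ t, ρ t ∈ Set.Icc 0 b) →
      ((Finset.univ.image ρ).filter (fun v => v < b)).card ≤ n →
      |∑ t, e t * (w (ρ t) - w b)| ≤ ∫ q in (0:ℝ)..b, |∑ t, if ρ t < q then e t else 0| := by
  intro n
  induction n with
  | zero =>
    intro e ρ b hb hρ hcard
    have hF : ((Finset.univ.image ρ).filter (fun v => v < b)) = ∅ :=
      Finset.card_eq_zero.1 (Nat.le_zero.1 hcard)
    have hall : ∀ t, ρ t = b := by
      intro t
      by_contra h
      have h1 : ρ t < b := lt_of_le_of_ne (hρ t).2 h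
      have : ρ t ∈ ((Finset.univ.image ρ).filter (fun v => v < b)) :=
        Finset.mem_filter.2 ⟨Finset.mem_image_of_mem ρ (Finset.mem_univ t), h1⟩
      rw [hF] at this; simp at this
    have hL : ∑ t, e t * (w (ρ t) - w b) = 0 := by
      apply Finset.sum_eq_zero; intro t _; rw [hall t]; ring
    rw [hL, abs_zero]
    apply intervalIntegral.integral_nonneg hb.1
    intro u _; positivity
  | succ n ih =>
    intro e ρ b hb hρ hcard
    set F := ((Finset.univ.image ρ).filter (fun v => v < b)) with hFdef
    rcases Finset.eq_empty_or_nonempty F with hF | hF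
    · have hall : ∀ t, ρ t = b := by
        intro t
        by_contra h
        have h1 : ρ t < b := lt_of_le_of_ne (hρ t).2 h
        have : ρ t ∈ F :=
          Finset.mem_filter.2 ⟨Finset.mem_image_of_mem ρ (Finset.mem_univ t), h1⟩
        rw [hF] at this; simp at this
      have hL : ∑ t, e t * (w (ρ t) - w b) = 0 := by
        apply Finset.sum_eq_zero; intro t _; rw [hall t]; ring
      rw [hL, abs_zero]
      apply intervalIntegral.integral_nonneg hb.1
      intro u _; positivity
    · set v := F.max' hF with hvdef
      have hvF : v ∈ F := F.max'_mem hF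
      obtain ⟨hvim, hvb⟩ := Finset.mem_filter.1 hvF
      obtain ⟨t0, _, ht0⟩ := Finset.mem_image.1 hvim
      have hv0 : 0 ≤ v := by rw [← ht0]; exact (hρ t0).1
      have hvmem : v ∈ Set.Icc (0:ℝ) 1 := ⟨hv0, le_trans (le_of_lt hvb) hb.2⟩
      have hvge : ∀ t, ρ t < b → ρ t ≤ v := by
        intro t ht
        exact F.le_max' _
          (Finset.mem_filter.2 ⟨Finset.mem_image_of_mem ρ (Finset.mem_univ t), ht⟩)
      set e' : Fin T → ℝ := fun t => if b ≤ ρ t then 0 else e t with he'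
      set ρ' : Fin T → ℝ := fun t => if b ≤ ρ t then v else ρ t with hρ'
      have hρ'mem : ∀ t, ρ' t ∈ Set.Icc (0:ℝ) v := by
        intro t
        simp only [hρ']
        split_ifs with h
        · exact ⟨hv0, le_refl v⟩
        · exact ⟨(hρ t).1, hvge t (lt_of_not_ge h)⟩
      have hcard' : ((Finset.univ.image ρ').filter (fun u => u < v)).card ≤ n := by
        have hsub : ((Finset.univ.image ρ').filter (fun u => u < v)) ⊆ F.erase v := by
          intro u hu
          obtain ⟨huim, huv⟩ := Finset.mem_filter.1 hu
          obtain ⟨t, _, htu⟩ := Finset.mem_image.1 huim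
          have : u = ρ t := by
            by_cases h : b ≤ ρ t
            · exfalso; rw [← htu] at huv; simp only [hρ'] at huv
              rw [if_pos h] at huv; exact lt_irrefl v huv
            · rw [← htu]; simp only [hρ']; rw [if_neg h]
          rw [Finset.mem_erase]
          refine ⟨ne_of_lt huv, Finset.mem_filter.2 ⟨?_, lt_trans huv hvb⟩⟩
          rw [this]; exact Finset.mem_image_of_mem ρ (Finset.mem_univ t)
        calc ((Finset.univ.image ρ').filter (fun u => u < v)).card
            ≤ (F.erase v).card := Finset.card_le_card hsub
          _ = F.card - 1 := Finset.card_erase_of_mem hvF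
          _ ≤ n := by omega
      have hIH := ih e' ρ' v hvmem hρ'mem hcard'
      have hsplit : ∑ t, e t * (w (ρ t) - w b) =
          (∑ t, e' t * (w (ρ' t) - w v)) + (w v - w b) * ∑ t, e' t := by
        rw [Finset.mul_sum, ← Finset.sum_add_distrib]
        apply Finset.sum_congr rfl
        intro t _
        simp only [he', hρ']
        split_ifs with h
        · have : ρ t = b := le_antisymm (hρ t).2 h
          rw [this]; ring
        · ring
      have hvble : v ≤ b := le_of_lt hvb
      have hInt1 : (∫ q in v..b, |∑ t, if ρ t < q then e t else 0|)
          = (b - v) * |∑ t, e' t| := by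
        have : (∫ q in v..b, |∑ t, if ρ t < q then e t else 0|)
            = ∫ q in v..b, |∑ t, e' t| := by
          apply intervalIntegral.integral_congr_ae
          apply MeasureTheory.ae_of_all
          intro q hq
          rw [Set.uIoc_of_le hvble] at hq
          show |∑ t, if ρ t < q then e t else 0| = |∑ t, e' t|
          congr 1
          apply Finset.sum_congr rfl
          intro t _
          simp only [he']
          by_cases h : b ≤ ρ t
          · rw [if_pos h, if_neg (by push_neg; exact le_trans hq.2 h)]
          · rw [if_neg h, if_pos (lt_of_le_of_lt (hvge t (lt_of_not_ge h)) hq.1)]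
        rw [this, intervalIntegral.integral_const, smul_eq_mul]
      have hInt2 : (∫ q in (0:ℝ)..v, |∑ t, if ρ' t < q then e' t else 0|)
          = ∫ q in (0:ℝ)..v, |∑ t, if ρ t < q then e t else 0| := by
        apply intervalIntegral.integral_congr
        intro q hq
        rw [Set.uIcc_of_le hv0] at hq
        show |∑ t, if ρ' t < q then e' t else 0| = |∑ t, if ρ t < q then e t else 0|
        congr 1
        apply Finset.sum_congr rfl
        intro t _
        simp only [he', hρ']
        by_cases h : b ≤ ρ t
        · have hnq : ¬ ρ t < q := by push_neg; linarith [hq.2]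
          rw [if_pos h, if_pos h, ite_self, if_neg hnq]
        · rw [if_neg h, if_neg h]
      have hadd : (∫ q in (0:ℝ)..b, |∑ t, if ρ t < q then e t else 0|)
          = (∫ q in (0:ℝ)..v, |∑ t, if ρ t < q then e t else 0|)
            + ∫ q in v..b, |∑ t, if ρ t < q then e t else 0| := by
        rw [intervalIntegral.integral_add_adjacent_intervals
          ((intInt_lt' e ρ 0 v).abs) ((intInt_lt' e ρ v b).abs)]
      have hlip : |w v - w b| ≤ b - v := by
        have := lip_bound' hw hvmem hb
        rwa [abs_sub_comm v b, abs_of_nonneg (by linarith : (0:ℝ) ≤ b - v)] at this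
      calc |∑ t, e t * (w (ρ t) - w b)|
          ≤ |∑ t, e' t * (w (ρ' t) - w v)| + |w v - w b| * |∑ t, e' t| := by
            rw [hsplit]; refine le_trans (abs_add_le _ _) ?_
            rw [abs_mul]
        _ ≤ (∫ q in (0:ℝ)..v, |∑ t, if ρ' t < q then e' t else 0|)
            + (b - v) * |∑ t, e' t| := by
            apply add_le_add hIH
            apply mul_le_mul_of_nonneg_right hlip (abs_nonneg _)
        _ = ∫ q in (0:ℝ)..b, |∑ t, if ρ t < q then e t else 0| := by
            rw [hInt2, hadd, hInt1]

/-- The smooth calibration error is at most `3/2` times the ℓ1 averaged two-bin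
calibration error. -/
theorem smCal_le_l1atb (T : ℕ) (hT : 0 < T) (r y : Fin T → ℝ)
    (hr : ∀ t, r t ∈ Set.Icc (0:ℝ) 1) (hy : ∀ t, y t = 0 ∨ y t = 1) :
    smCalSeq r y ≤ (3 / 2) * l1atbSeq r y := by
  set e : Fin T → ℝ := fun t => r t - y t with he
  set A : ℝ := ∫ q in (0:ℝ)..1, |∑ t, if r t < q then e t else 0| with hA
  set B : ℝ := ∫ q in (0:ℝ)..1, |∑ t, if q ≤ r t then e t else 0| with hB
  have hA0 : 0 ≤ A := by
    apply intervalIntegral.integral_nonneg zero_le_one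
    intro u _; positivity
  have hB0 : 0 ≤ B := by
    apply intervalIntegral.integral_nonneg zero_le_one
    intro u _; positivity
  have hl1 : l1atbSeq r y = (1 / (T:ℝ)) * (A + B) := by
    rw [l1atbSeq]
    rw [intervalIntegral.integral_const_mul]
    congr 1
    rw [hA, hB]
    exact intervalIntegral.integral_add ((intInt_lt' e r 0 1).abs) ((intInt_ge e r 0 1).abs)
  have hE : |∑ t, e t| ≤ A + B := by
    have h1 : |∑ t, e t| = ∫ q in (0:ℝ)..1, |∑ t, e t| := by
      rw [intervalIntegral.integral_const]; simp
    rw [h1, hA, hB,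
      ← intervalIntegral.integral_add ((intInt_lt' e r 0 1).abs) ((intInt_ge e r 0 1).abs)]
    apply intervalIntegral.integral_mono_on zero_le_one intervalIntegrable_const
      (((intInt_lt' e r 0 1).abs).add ((intInt_ge e r 0 1).abs))
    intro q _
    have hsum : ∑ t, e t =
        (∑ t, if r t < q then e t else 0) + (∑ t, if q ≤ r t then e t else 0) := by
      rw [← Finset.sum_add_distrib]
      apply Finset.sum_congr rfl
      intro t _
      rcases lt_or_ge (r t) q with h | h
      · rw [if_pos h, if_neg (not_le.2 h), add_zero]
      · rw [if_neg (not_lt.2 h), if_pos h, zero_add]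
    calc |∑ t, e t| = |(∑ t, if r t < q then e t else 0) + (∑ t, if q ≤ r t then e t else 0)| := by
          rw [← hsum]
      _ ≤ |∑ t, if r t < q then e t else 0| + |∑ t, if q ≤ r t then e t else 0| := abs_add_le _ _
  have hT' : (0:ℝ) ≤ 1 / (T:ℝ) := by positivity
  rw [smCalSeq]
  apply Real.sSup_le
  · rintro c ⟨w, hw, hwB, rfl⟩
    have h0m : (0:ℝ) ∈ Set.Icc (0:ℝ) 1 := ⟨le_refl 0, zero_le_one⟩
    have h1m : (1:ℝ) ∈ Set.Icc (0:ℝ) 1 := ⟨zero_le_one, le_refl 1⟩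
    have hw0 : |w 0| ≤ 1 := abs_le.2 ⟨(hwB 0 h0m).1, (hwB 0 h0m).2⟩
    have hw1 : |w 1| ≤ 1 := abs_le.2 ⟨(hwB 1 h1m).1, (hwB 1 h1m).2⟩
    have hkeyB : |∑ t, e t * (w (r t) - w 0)| ≤ B := by
      rw [hB]
      exact keyGE w hw _ e r 0 h0m hr (le_refl _)
    have hkeyA : |∑ t, e t * (w (r t) - w 1)| ≤ A := by
      rw [hA]
      exact keyLT w hw _ e r 1 h1m hr (le_refl _)
    have hd0 : ∑ t, e t * w (r t) =
        (∑ t, e t * (w (r t) - w 0)) + w 0 * ∑ t, e t := by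
      rw [Finset.mul_sum, ← Finset.sum_add_distrib]
      apply Finset.sum_congr rfl
      intro t _; ring
    have hd1 : ∑ t, e t * w (r t) =
        (∑ t, e t * (w (r t) - w 1)) + w 1 * ∑ t, e t := by
      rw [Finset.mul_sum, ← Finset.sum_add_distrib]
      apply Finset.sum_congr rfl
      intro t _; ring
    have hc1 : ∑ t, e t * w (r t) ≤ B + |∑ t, e t| := by
      rw [hd0]
      have : w 0 * ∑ t, e t ≤ |w 0 * ∑ t, e t| := le_abs_self _
      rw [abs_mul] at this
      have h2 : (∑ t, e t * (w (r t) - w 0)) ≤ B := le_trans (le_abs_self _) hkeyB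
      nlinarith [abs_nonneg (∑ t, e t)]
    have hc2 : ∑ t, e t * w (r t) ≤ A + |∑ t, e t| := by
      rw [hd1]
      have : w 1 * ∑ t, e t ≤ |w 1 * ∑ t, e t| := le_abs_self _
      rw [abs_mul] at this
      have h2 : (∑ t, e t * (w (r t) - w 1)) ≤ A := le_trans (le_abs_self _) hkeyA
      nlinarith [abs_nonneg (∑ t, e t)]
    have hmain : ∑ t, e t * w (r t) ≤ (3/2) * (A + B) := by linarith
    calc (1 / (T:ℝ)) * ∑ t, (r t - y t) * w (r t)
        = (1 / (T:ℝ)) * ∑ t, e t * w (r t) := by rw [he]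
      _ ≤ (1 / (T:ℝ)) * ((3/2) * (A + B)) := mul_le_mul_of_nonneg_left hmain hT'
      _ = (3/2) * ((1 / (T:ℝ)) * (A + B)) := by ring
      _ = (3/2) * l1atbSeq r y := by rw [hl1]
  · rw [hl1]
    positivity

end
end

section
/- For every probability distribution J on [0,1] × {0,1}, it holds that (2/3) · smCal(J) ≤ ℓ1-ATB(J) ≤ 3 · distCal(J). -/
open MeasureTheory Finset
open scoped ENNReal

noncomputable section

/-- Bias of the lower bin `{v < q}` under a distribution `mu` of prediction-state pairs. -/
def binNeg (mu : Measure (ℝ × ℝ)) (q : ℝ) : ℝ :=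
  ∫ x, (x.1 - x.2) * (if x.1 < q then 1 else 0) ∂mu

/-- Bias of the upper bin `{v ≥ q}` under a distribution `mu` of prediction-state pairs. -/
def binPos (mu : Measure (ℝ × ℝ)) (q : ℝ) : ℝ :=
  ∫ x, (x.1 - x.2) * (if q ≤ x.1 then 1 else 0) ∂mu

/-- Averaged two-bin calibration error of a prediction-state distribution. -/
def ATB (mu : Measure (ℝ × ℝ)) : ℝ :=
  ∫ q in (0:ℝ)..1, ((binNeg mu q)^2 + (binPos mu q)^2)

/-- ℓ1 variant of the averaged two-bin calibration error of a distribution. -/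
def l1ATB (mu : Measure (ℝ × ℝ)) : ℝ :=
  ∫ q in (0:ℝ)..1, (|binNeg mu q| + |binPos mu q|)

/-- A distribution of `(v, y)` is calibrated if `E[y | v] = v` almost surely; equivalently,
`∫ y = ∫ v` over every event measurable in the prediction `v`. -/
def Calibrated (mu : Measure (ℝ × ℝ)) : Prop :=
  ∀ s : Set ℝ, MeasurableSet s →
    ∫ x in Prod.fst ⁻¹' s, x.2 ∂mu = ∫ x in Prod.fst ⁻¹' s, x.1 ∂mu

/-- The lower distance to calibration: the infimum of `E |u - v|` over couplings `(u, v, y)`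
whose `(v,y)`-marginal is `mu` and whose `(u,y)`-marginal is calibrated. -/
def distCal (mu : Measure (ℝ × ℝ)) : ℝ :=
  sInf { c : ℝ | ∃ P : Measure (ℝ × ℝ × ℝ), IsProbabilityMeasure P ∧
    P.map (fun x => x.2) = mu ∧
    Calibrated (P.map (fun x => (x.1, x.2.2))) ∧
    (∀ᵐ x ∂P, x.1 ∈ Set.Icc (0:ℝ) 1) ∧
    c = ∫ x, |x.1 - x.2.1| ∂P }

/-- Smooth calibration error of a distribution: the supremum of `E[(v - y) w(v)]` over
1-Lipschitz weight functions `w : [0,1] → [-1,1]`. -/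
def smCal (mu : Measure (ℝ × ℝ)) : ℝ :=
  sSup { c : ℝ | ∃ w : ℝ → ℝ, LipschitzOnWith 1 w (Set.Icc 0 1) ∧
    (∀ x ∈ Set.Icc (0:ℝ) 1, w x ∈ Set.Icc (-1:ℝ) 1) ∧
    c = ∫ x, (x.1 - x.2) * w x.1 ∂mu }

abbrev rho01 : Measure ℝ := volume.restrict (Set.Ioc 0 1)

instance : IsProbabilityMeasure rho01 := ⟨by simp [Real.volume_Ioc]⟩

lemma ind_abs_le (b : Prop) [Decidable b] : |(if b then (1:ℝ) else 0)| ≤ 1 := by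
  split <;> norm_num

lemma integrable_of_bound {α : Type*} [MeasurableSpace α] {μ : Measure α} [IsFiniteMeasure μ]
    {f : α → ℝ} (hf : AEStronglyMeasurable f μ) (C : ℝ) (h : ∀ᵐ x ∂μ, |f x| ≤ C) :
    Integrable f μ :=
  (integrable_const C).mono' hf (by simpa [Real.norm_eq_abs] using h)

lemma abs_integral_le {α : Type*} [MeasurableSpace α] {μ : Measure α} [IsProbabilityMeasure μ]
    {f : α → ℝ} (C : ℝ) (h : ∀ᵐ x ∂μ, |f x| ≤ C) : |∫ x, f x ∂μ| ≤ C := by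
  have := norm_integral_le_of_norm_le_const (μ := μ) (f := f) (C := C)
    (by simpa [Real.norm_eq_abs] using h)
  simpa [Real.norm_eq_abs] using this

lemma clamp_lip : LipschitzWith 1 (fun v : ℝ => max 0 (min 1 v)) := by
  apply LipschitzWith.of_dist_le_mul
  intro a b
  simp only [Real.dist_eq, NNReal.coe_one, one_mul]
  calc |max 0 (min 1 a) - max 0 (min 1 b)| = |max (min 1 a) 0 - max (min 1 b) 0| := by
        rw [max_comm 0, max_comm 0]
    _ ≤ |min 1 a - min 1 b| := abs_max_sub_max_le_abs _ _ _
    _ ≤ max |1 - 1| |a - b| := abs_min_sub_min_le_max _ _ _ _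
    _ = |a - b| := by simp

lemma clamp_mem (v : ℝ) : max 0 (min 1 v) ∈ Set.Icc (0:ℝ) 1 :=
  ⟨le_max_left _ _, max_le (by norm_num) (min_le_left _ _)⟩

section BinLemmas

lemma meas_fneg (q : ℝ) :
    Measurable fun x : ℝ × ℝ => (x.1 - x.2) * (if x.1 < q then (1:ℝ) else 0) :=
  (measurable_fst.sub measurable_snd).mul
    (Measurable.ite (measurableSet_lt measurable_fst measurable_const)
      measurable_const measurable_const)

lemma meas_fpos (q : ℝ) :
    Measurable fun x : ℝ × ℝ => (x.1 - x.2) * (if q ≤ x.1 then (1:ℝ) else 0) :=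
  (measurable_fst.sub measurable_snd).mul
    (Measurable.ite (measurableSet_le measurable_const measurable_fst)
      measurable_const measurable_const)

lemma meas_joint_neg :
    Measurable fun p : ℝ × (ℝ × ℝ) => (p.2.1 - p.2.2) * (if p.2.1 < p.1 then (1:ℝ) else 0) :=
  ((measurable_fst.comp measurable_snd).sub (measurable_snd.comp measurable_snd)).mul
    (Measurable.ite (measurableSet_lt (measurable_fst.comp measurable_snd) measurable_fst)
      measurable_const measurable_const)

lemma meas_joint_pos :
    Measurable fun p : ℝ × (ℝ × ℝ) => (p.2.1 - p.2.2) * (if p.1 ≤ p.2.1 then (1:ℝ) else 0) :=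
  ((measurable_fst.comp measurable_snd).sub (measurable_snd.comp measurable_snd)).mul
    (Measurable.ite (measurableSet_le measurable_fst (measurable_fst.comp measurable_snd))
      measurable_const measurable_const)

variable {mu : Measure (ℝ × ℝ)} [IsProbabilityMeasure mu]

omit [IsProbabilityMeasure mu] in
lemma ae_abs_sub_le (hsupp : ∀ᵐ x ∂mu, x.1 ∈ Set.Icc (0:ℝ) 1 ∧ (x.2 = 0 ∨ x.2 = 1)) :
    ∀ᵐ x ∂mu, |x.1 - x.2| ≤ 1 := by
  filter_upwards [hsupp] with x hx
  obtain ⟨⟨h0, h1⟩, hy⟩ := hx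
  rcases hy with h | h <;> rw [h, abs_le] <;> constructor <;> linarith

lemma integrable_fneg (hb : ∀ᵐ x ∂mu, |x.1 - x.2| ≤ 1) (q : ℝ) :
    Integrable (fun x : ℝ × ℝ => (x.1 - x.2) * (if x.1 < q then (1:ℝ) else 0)) mu := by
  apply integrable_of_bound (meas_fneg q).aestronglyMeasurable 1
  filter_upwards [hb] with x hx
  rw [abs_mul]
  exact mul_le_one₀ hx (abs_nonneg _) (ind_abs_le _)

lemma integrable_fpos (hb : ∀ᵐ x ∂mu, |x.1 - x.2| ≤ 1) (q : ℝ) :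
    Integrable (fun x : ℝ × ℝ => (x.1 - x.2) * (if q ≤ x.1 then (1:ℝ) else 0)) mu := by
  apply integrable_of_bound (meas_fpos q).aestronglyMeasurable 1
  filter_upwards [hb] with x hx
  rw [abs_mul]
  exact mul_le_one₀ hx (abs_nonneg _) (ind_abs_le _)

lemma binNeg_abs_le (hb : ∀ᵐ x ∂mu, |x.1 - x.2| ≤ 1) (q : ℝ) : |binNeg mu q| ≤ 1 := by
  apply abs_integral_le
  filter_upwards [hb] with x hx
  rw [abs_mul]
  exact mul_le_one₀ hx (abs_nonneg _) (ind_abs_le _)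

lemma binPos_abs_le (hb : ∀ᵐ x ∂mu, |x.1 - x.2| ≤ 1) (q : ℝ) : |binPos mu q| ≤ 1 := by
  apply abs_integral_le
  filter_upwards [hb] with x hx
  rw [abs_mul]
  exact mul_le_one₀ hx (abs_nonneg _) (ind_abs_le _)

lemma binNeg_add_binPos (hb : ∀ᵐ x ∂mu, |x.1 - x.2| ≤ 1) (q : ℝ) :
    binNeg mu q + binPos mu q = ∫ x, (x.1 - x.2) ∂mu := by
  rw [binNeg, binPos, ← integral_add (integrable_fneg hb q) (integrable_fpos hb q)]
  congr 1
  funext x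
  rcases lt_or_ge x.1 q with h | h
  · rw [if_pos h, if_neg (not_le.mpr h)]; ring
  · rw [if_neg (not_lt.mpr h), if_pos h]; ring

lemma binNeg_smeas : StronglyMeasurable fun q => binNeg mu q :=
  meas_joint_neg.stronglyMeasurable.integral_prod_right'

lemma binPos_smeas : StronglyMeasurable fun q => binPos mu q :=
  meas_joint_pos.stronglyMeasurable.integral_prod_right'

omit [IsProbabilityMeasure mu] in
lemma l1ATB_eq : l1ATB mu = ∫ q, (|binNeg mu q| + |binPos mu q|) ∂rho01 :=
  intervalIntegral.integral_of_le zero_le_one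

lemma integrable_absbin (hb : ∀ᵐ x ∂mu, |x.1 - x.2| ≤ 1) :
    Integrable (fun q => |binNeg mu q| + |binPos mu q|) rho01 := by
  apply integrable_of_bound
    ((binNeg_smeas.measurable.abs.add binPos_smeas.measurable.abs).aestronglyMeasurable) 2
  refine Filter.Eventually.of_forall fun q => ?_
  have h1 := binNeg_abs_le hb q
  have h2 := binPos_abs_le hb q
  simp only [Pi.add_apply]; rw [abs_le]
  constructor
  · have := abs_nonneg (binNeg mu q); have := abs_nonneg (binPos mu q); linarith
  · have := le_abs_self (|binNeg mu q| + |binPos mu q|)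
    calc |binNeg mu q| + |binPos mu q| ≤ 1 + 1 := add_le_add h1 h2
    _ = 2 := by norm_num

lemma abs_c0_le_l1ATB (hb : ∀ᵐ x ∂mu, |x.1 - x.2| ≤ 1) :
    |∫ x, (x.1 - x.2) ∂mu| ≤ l1ATB mu := by
  rw [l1ATB_eq]
  have h0 : |∫ x, (x.1 - x.2) ∂mu| = ∫ _q, |∫ x, (x.1 - x.2) ∂mu| ∂rho01 := by
    rw [integral_const]; simp
  rw [h0]
  apply integral_mono (integrable_const _) (integrable_absbin hb)
  intro q
  rw [← binNeg_add_binPos hb q]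
  exact abs_add_le _ _

omit [IsProbabilityMeasure mu] in
lemma l1ATB_nonneg : 0 ≤ l1ATB mu := by
  rw [l1ATB_eq]
  apply integral_nonneg
  intro q
  positivity

end BinLemmas

section Fubini1

variable {mu : Measure (ℝ × ℝ)} [IsProbabilityMeasure mu]

lemma fubini_pos (hb : ∀ᵐ x ∂mu, |x.1 - x.2| ≤ 1)
    {S : ℝ → ℝ} (hS : Measurable S) (hS1 : ∀ q, |S q| ≤ 1) :
    ∫ x, (x.1 - x.2) * (∫ q, S q * (if q ≤ x.1 then 1 else 0) ∂rho01) ∂mu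
      = ∫ q, S q * binPos mu q ∂rho01 := by
  have hmeas : Measurable (Function.uncurry fun (x : ℝ × ℝ) (q : ℝ) =>
      (x.1 - x.2) * (S q * (if q ≤ x.1 then 1 else 0))) := by
    apply Measurable.mul (measurable_fst.fst.sub measurable_fst.snd)
    apply Measurable.mul (hS.comp measurable_snd)
    exact Measurable.ite (measurableSet_le measurable_snd measurable_fst.fst)
      measurable_const measurable_const
  have hbd : Integrable (fun x : ℝ × ℝ => |x.1 - x.2|) mu :=
    integrable_of_bound ((measurable_fst.sub measurable_snd).abs.aestronglyMeasurable) 1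
      (by simpa using hb)
  have hint : Integrable (Function.uncurry fun (x : ℝ × ℝ) (q : ℝ) =>
      (x.1 - x.2) * (S q * (if q ≤ x.1 then 1 else 0))) (mu.prod rho01) := by
    apply Integrable.mono' (g := fun p => |p.1.1 - p.1.2| * 1)
      (hbd.mul_prod (integrable_const 1)) hmeas.aestronglyMeasurable
    refine Filter.Eventually.of_forall fun p => ?_
    simp only [Function.uncurry, Real.norm_eq_abs, abs_mul, mul_one]
    have h1 : |S p.2| * |if p.2 ≤ p.1.1 then (1:ℝ) else 0| ≤ 1 :=
      mul_le_one₀ (hS1 _) (abs_nonneg _) (ind_abs_le _)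
    exact le_trans (mul_le_mul_of_nonneg_left h1 (abs_nonneg _)) (le_of_eq (mul_one _))
  have swap := integral_integral_swap hint
  have lhs_eq : ∀ x : ℝ × ℝ, (x.1 - x.2) * (∫ q, S q * (if q ≤ x.1 then 1 else 0) ∂rho01)
      = ∫ q, (x.1 - x.2) * (S q * (if q ≤ x.1 then 1 else 0)) ∂rho01 := fun x =>
    (integral_const_mul _ _).symm
  calc ∫ x, (x.1 - x.2) * (∫ q, S q * (if q ≤ x.1 then 1 else 0) ∂rho01) ∂mu
      = ∫ x, ∫ q, (x.1 - x.2) * (S q * (if q ≤ x.1 then 1 else 0)) ∂rho01 ∂mu := by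
        simp_rw [lhs_eq]
    _ = ∫ q, ∫ x, (x.1 - x.2) * (S q * (if q ≤ x.1 then 1 else 0)) ∂mu ∂rho01 := swap
    _ = ∫ q, S q * binPos mu q ∂rho01 := by
        apply integral_congr_ae
        refine Filter.Eventually.of_forall fun q => ?_
        show (∫ x : ℝ × ℝ, (x.1 - x.2) * (S q * (if q ≤ x.1 then 1 else 0)) ∂mu)
          = S q * binPos mu q
        rw [show S q * binPos mu q
          = ∫ x, S q * ((x.1 - x.2) * (if q ≤ x.1 then 1 else 0)) ∂mu from
            (integral_const_mul _ _).symm]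
        congr 1; funext x; ring


lemma fubini_neg (hb : ∀ᵐ x ∂mu, |x.1 - x.2| ≤ 1)
    {S : ℝ → ℝ} (hS : Measurable S) (hS1 : ∀ q, |S q| ≤ 1) :
    ∫ x, (x.1 - x.2) * (∫ q, S q * (if x.1 < q then 1 else 0) ∂rho01) ∂mu
      = ∫ q, S q * binNeg mu q ∂rho01 := by
  have hmeas : Measurable (Function.uncurry fun (x : ℝ × ℝ) (q : ℝ) =>
      (x.1 - x.2) * (S q * (if x.1 < q then 1 else 0))) := by
    apply Measurable.mul (measurable_fst.fst.sub measurable_fst.snd)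
    apply Measurable.mul (hS.comp measurable_snd)
    exact Measurable.ite (measurableSet_lt measurable_fst.fst measurable_snd)
      measurable_const measurable_const
  have hbd : Integrable (fun x : ℝ × ℝ => |x.1 - x.2|) mu :=
    integrable_of_bound ((measurable_fst.sub measurable_snd).abs.aestronglyMeasurable) 1
      (by simpa using hb)
  have hint : Integrable (Function.uncurry fun (x : ℝ × ℝ) (q : ℝ) =>
      (x.1 - x.2) * (S q * (if x.1 < q then 1 else 0))) (mu.prod rho01) := by
    apply Integrable.mono' (g := fun p => |p.1.1 - p.1.2| * 1)
      (hbd.mul_prod (integrable_const 1)) hmeas.aestronglyMeasurable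
    refine Filter.Eventually.of_forall fun p => ?_
    simp only [Function.uncurry, Real.norm_eq_abs, abs_mul, mul_one]
    have h1 : |S p.2| * |if p.1.1 < p.2 then (1:ℝ) else 0| ≤ 1 :=
      mul_le_one₀ (hS1 _) (abs_nonneg _) (ind_abs_le _)
    exact le_trans (mul_le_mul_of_nonneg_left h1 (abs_nonneg _)) (le_of_eq (mul_one _))
  have swap := integral_integral_swap hint
  have lhs_eq : ∀ x : ℝ × ℝ, (x.1 - x.2) * (∫ q, S q * (if x.1 < q then 1 else 0) ∂rho01)
      = ∫ q, (x.1 - x.2) * (S q * (if x.1 < q then 1 else 0)) ∂rho01 := fun x =>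
    (integral_const_mul _ _).symm
  calc ∫ x, (x.1 - x.2) * (∫ q, S q * (if x.1 < q then 1 else 0) ∂rho01) ∂mu
      = ∫ x, ∫ q, (x.1 - x.2) * (S q * (if x.1 < q then 1 else 0)) ∂rho01 ∂mu := by
        simp_rw [lhs_eq]
    _ = ∫ q, ∫ x, (x.1 - x.2) * (S q * (if x.1 < q then 1 else 0)) ∂mu ∂rho01 := swap
    _ = ∫ q, S q * binNeg mu q ∂rho01 := by
        apply integral_congr_ae
        refine Filter.Eventually.of_forall fun q => ?_
        show (∫ x : ℝ × ℝ, (x.1 - x.2) * (S q * (if x.1 < q then 1 else 0)) ∂mu)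
          = S q * binNeg mu q
        rw [show S q * binNeg mu q
          = ∫ x, S q * ((x.1 - x.2) * (if x.1 < q then 1 else 0)) ∂mu from
            (integral_const_mul _ _).symm]
        congr 1; funext x; ring

end Fubini1

section Part1

variable {mu : Measure (ℝ × ℝ)} [IsProbabilityMeasure mu]

lemma part1_eps (hsupp : ∀ᵐ x ∂mu, x.1 ∈ Set.Icc (0:ℝ) 1 ∧ (x.2 = 0 ∨ x.2 = 1))
    {w : ℝ → ℝ} (hlip : LipschitzOnWith 1 w (Set.Icc 0 1))
    (hbdw : ∀ x ∈ Set.Icc (0:ℝ) 1, w x ∈ Set.Icc (-1:ℝ) 1)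
    {h : ℝ} (hh : 0 < h) :
    ∫ x, (x.1 - x.2) * w x.1 ∂mu ≤ 3/2 * l1ATB mu + h := by
  have hb : ∀ᵐ x ∂mu, |x.1 - x.2| ≤ 1 := ae_abs_sub_le hsupp
  have hdlip := lipschitzOnWith_iff_dist_le_mul.mp hlip
  -- the clamped weight function
  set Wc : ℝ → ℝ := fun v => w (max 0 (min 1 v)) with hWcdef
  have hWlip : ∀ a b : ℝ, |Wc a - Wc b| ≤ |a - b| := by
    intro a b
    have h1 := hdlip _ (clamp_mem a) _ (clamp_mem b)
    have h2 := clamp_lip.dist_le_mul a b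
    simp only [Real.dist_eq, NNReal.coe_one, one_mul] at h1 h2
    exact le_trans h1 h2
  have hWbd : ∀ v, |Wc v| ≤ 1 := by
    intro v
    obtain ⟨hl, hr⟩ := hbdw _ (clamp_mem v)
    rw [abs_le]; exact ⟨hl, hr⟩
  have hWeq : ∀ v ∈ Set.Icc (0:ℝ) 1, Wc v = w v := by
    intro v hv
    have : max 0 (min 1 v) = v := by
      rw [min_eq_right hv.2, max_eq_right hv.1]
    rw [hWcdef]; simp only [this]
  have hWcont : Continuous Wc := by
    rw [Metric.continuous_iff]
    intro b ε hε
    exact ⟨ε, hε, fun a ha => lt_of_le_of_lt (by simpa [Real.dist_eq] using hWlip a b) ha⟩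
  -- the difference-quotient weight
  set S : ℝ → ℝ := fun q => (Wc (q + h) - Wc q) / h with hSdef
  have hScont : Continuous S :=
    ((hWcont.comp (continuous_id.add continuous_const)).sub hWcont).div_const h
  have hSmeas : Measurable S := hScont.measurable
  have hS1 : ∀ q, |S q| ≤ 1 := by
    intro q
    rw [hSdef]
    simp only [abs_div, abs_of_pos hh]
    rw [div_le_one hh]
    have := hWlip (q + h) q
    simp only [add_sub_cancel_left, abs_of_pos hh] at this
    exact this
  -- the bin-weight integrals
  set G1 : ℝ → ℝ := fun v => ∫ q, S q * (if q ≤ v then 1 else 0) ∂rho01 with hG1def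
  set G2 : ℝ → ℝ := fun v => ∫ q, S q * (if v < q then 1 else 0) ∂rho01 with hG2def
  have hintS1 : ∀ v, Integrable (fun q => S q * (if q ≤ v then 1 else 0)) rho01 := by
    intro v
    apply integrable_of_bound ((hSmeas.mul (Measurable.ite (measurableSet_Iic)
      measurable_const measurable_const)).aestronglyMeasurable) 1
    refine Filter.Eventually.of_forall fun q => ?_
    simp only [Pi.mul_apply, Pi.sub_apply, Function.comp_apply]; rw [abs_mul]
    exact mul_le_one₀ (hS1 q) (abs_nonneg _) (ind_abs_le _)
  have hintS2 : ∀ v, Integrable (fun q => S q * (if v < q then 1 else 0)) rho01 := by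
    intro v
    apply integrable_of_bound ((hSmeas.mul (Measurable.ite (measurableSet_Ioi)
      measurable_const measurable_const)).aestronglyMeasurable) 1
    refine Filter.Eventually.of_forall fun q => ?_
    simp only [Pi.mul_apply, Pi.sub_apply, Function.comp_apply]; rw [abs_mul]
    exact mul_le_one₀ (hS1 q) (abs_nonneg _) (ind_abs_le _)
  have hG1meas : Measurable G1 := by
    have hj : StronglyMeasurable fun p : ℝ × ℝ => S p.2 * (if p.2 ≤ p.1 then (1:ℝ) else 0) :=
      Measurable.stronglyMeasurable <| (hSmeas.comp measurable_snd).mul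
        (Measurable.ite (measurableSet_le measurable_snd measurable_fst)
          measurable_const measurable_const)
    exact hj.integral_prod_right'.measurable
  have habsG1 : ∀ v, |G1 v| ≤ 1 := by
    intro v
    apply abs_integral_le
    refine Filter.Eventually.of_forall fun q => ?_
    rw [abs_mul]
    exact mul_le_one₀ (hS1 q) (abs_nonneg _) (ind_abs_le _)
  have habsG2 : ∀ v, |G2 v| ≤ 1 := by
    intro v
    apply abs_integral_le
    refine Filter.Eventually.of_forall fun q => ?_
    rw [abs_mul]
    exact mul_le_one₀ (hS1 q) (abs_nonneg _) (ind_abs_le _)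
  have key2 : ∀ v, G1 v + G2 v = ∫ q, S q ∂rho01 := by
    intro v
    rw [hG1def, hG2def]
    simp only []
    rw [← integral_add (hintS1 v) (hintS2 v)]
    apply integral_congr_ae
    refine Filter.Eventually.of_forall fun q => ?_
    rcases le_or_gt q v with hqv | hqv
    · simp only [if_pos hqv, if_neg (not_lt.mpr hqv), mul_one, mul_zero, add_zero]
    · simp only [if_neg (not_le.mpr hqv), if_pos hqv, mul_one, mul_zero, zero_add]
  have hWint : ∀ a b : ℝ, IntervalIntegrable Wc volume a b :=
    fun a b => hWcont.intervalIntegrable a b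
  have hWhint : ∀ a b : ℝ, IntervalIntegrable (fun q => Wc (q + h)) volume a b :=
    fun a b => (hWcont.comp (continuous_id.add continuous_const)).intervalIntegrable a b
  have key1 : ∀ v ∈ Set.Icc (0:ℝ) 1,
      G1 v = (1/h) * ((∫ t in v..(v+h), Wc t) - ∫ t in (0:ℝ)..h, Wc t) := by
    intro v hv
    have e1 : G1 v = ∫ q in (0:ℝ)..v, S q := by
      rw [hG1def]
      have hind : (fun q => S q * (if q ≤ v then 1 else 0)) = Set.indicator (Set.Iic v) S := by
        funext q
        rw [Set.indicator_apply]
        by_cases hq : q ∈ Set.Iic v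
        · simp only [if_pos hq, if_pos (show q ≤ v from hq), mul_one]
        · simp only [if_neg hq, if_neg (show ¬ q ≤ v from hq), mul_zero]
      simp only []
      rw [hind, integral_indicator measurableSet_Iic,
        Measure.restrict_restrict measurableSet_Iic]
      have hset : Set.Iic v ∩ Set.Ioc 0 1 = Set.Ioc 0 v := by
        ext q
        simp only [Set.mem_inter_iff, Set.mem_Iic, Set.mem_Ioc]
        constructor
        · rintro ⟨h1, h2, h3⟩; exact ⟨h2, h1⟩
        · rintro ⟨h1, h2⟩; exact ⟨h2, h1, le_trans h2 hv.2⟩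
      rw [hset, intervalIntegral.integral_of_le hv.1]
    rw [e1]
    have e2 : ∀ q, S q = (1/h) * (Wc (q + h) - Wc q) := fun q => by rw [hSdef]; ring
    simp_rw [e2]
    rw [intervalIntegral.integral_const_mul]
    congr 1
    rw [intervalIntegral.integral_sub (hWhint 0 v) (hWint 0 v)]
    have e3 : (∫ q in (0:ℝ)..v, Wc (q + h)) = ∫ t in (0+h)..(v+h), Wc t :=
      intervalIntegral.integral_comp_add_right Wc h
    have a1 := intervalIntegral.integral_add_adjacent_intervals (hWint 0 h) (hWint h (v+h))
    have a2 := intervalIntegral.integral_add_adjacent_intervals (hWint 0 v) (hWint v (v+h))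
    rw [e3, zero_add]
    linarith [a1, a2]
  -- the smoothed weight function
  set Cc : ℝ := (1/h) * ∫ t in (0:ℝ)..h, Wc t with hCcdef
  set wh : ℝ → ℝ := fun v => G1 v + Cc with hwhdef
  have havg : ∀ v ∈ Set.Icc (0:ℝ) 1, wh v = (1/h) * ∫ t in v..(v+h), Wc t := by
    intro v hv
    rw [hwhdef]
    simp only []
    rw [key1 v hv, hCcdef]
    ring
  have hwh_bd : ∀ v ∈ Set.Icc (0:ℝ) 1, |wh v| ≤ 1 := by
    intro v hv
    rw [havg v hv, abs_mul]
    have h2 : |∫ t in v..(v+h), Wc t| ≤ h := by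
      have hle := intervalIntegral.norm_integral_le_of_norm_le_const
        (C := 1) (f := Wc) (a := v) (b := v + h)
        (fun t _ => by simpa [Real.norm_eq_abs] using hWbd t)
      rw [add_sub_cancel_left, abs_of_pos hh] at hle
      simpa [Real.norm_eq_abs] using hle
    calc |1/h| * |∫ t in v..(v+h), Wc t| ≤ |1/h| * h :=
          mul_le_mul_of_nonneg_left h2 (abs_nonneg _)
      _ = 1 := by rw [abs_of_pos (by positivity)]; field_simp
  have hwh_close : ∀ v ∈ Set.Icc (0:ℝ) 1, |wh v - Wc v| ≤ h := by
    intro v hv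
    have hconst : (∫ _t in v..(v+h), (Wc v : ℝ)) = h * Wc v := by
      rw [intervalIntegral.integral_const, add_sub_cancel_left, smul_eq_mul]
    have hdiff : wh v - Wc v = (1/h) * ∫ t in v..(v+h), (Wc t - Wc v) := by
      rw [intervalIntegral.integral_sub (hWint v (v+h)) intervalIntegrable_const,
        hconst, havg v hv]
      field_simp
    rw [hdiff, abs_mul]
    have h2 : |∫ t in v..(v+h), (Wc t - Wc v)| ≤ h * h := by
      have hle := intervalIntegral.norm_integral_le_of_norm_le_const
        (C := h) (f := fun t => Wc t - Wc v) (a := v) (b := v + h)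
        (fun t ht => by
          rw [Set.uIoc_of_le (by linarith)] at ht
          rw [Real.norm_eq_abs]
          calc |Wc t - Wc v| ≤ |t - v| := hWlip t v
            _ ≤ h := by rw [abs_of_pos (by linarith [ht.1])]; linarith [ht.2])
      rw [add_sub_cancel_left, abs_of_pos hh] at hle
      exact hle
    calc |1/h| * |∫ t in v..(v+h), (Wc t - Wc v)| ≤ |1/h| * (h * h) :=
          mul_le_mul_of_nonneg_left h2 (abs_nonneg _)
      _ = h := by rw [abs_of_pos (by positivity)]; field_simp
  -- integrability of the weighted integrands
  have hwh_meas : Measurable wh := hG1meas.add measurable_const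
  have intWc : Integrable (fun x : ℝ × ℝ => (x.1 - x.2) * Wc x.1) mu := by
    apply integrable_of_bound (((measurable_fst.sub measurable_snd).mul
      (hWcont.measurable.comp measurable_fst)).aestronglyMeasurable) 1
    filter_upwards [hb] with x hx
    simp only [Pi.mul_apply, Pi.sub_apply, Function.comp_apply]; rw [abs_mul]
    exact mul_le_one₀ hx (abs_nonneg _) (hWbd _)
  have intwh : Integrable (fun x : ℝ × ℝ => (x.1 - x.2) * wh x.1) mu := by
    apply integrable_of_bound (((measurable_fst.sub measurable_snd).mul
      (hwh_meas.comp measurable_fst)).aestronglyMeasurable) 1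
    filter_upwards [hb, hsupp] with x hx hx2
    simp only [Pi.mul_apply, Pi.sub_apply, Function.comp_apply]; rw [abs_mul]
    exact mul_le_one₀ hx (abs_nonneg _) (hwh_bd _ hx2.1)
  have intG1 : Integrable (fun x : ℝ × ℝ => (x.1 - x.2) * G1 x.1) mu := by
    apply integrable_of_bound (((measurable_fst.sub measurable_snd).mul
      (hG1meas.comp measurable_fst)).aestronglyMeasurable) 1
    filter_upwards [hb] with x hx
    simp only [Pi.mul_apply, Pi.sub_apply, Function.comp_apply]; rw [abs_mul]
    exact mul_le_one₀ hx (abs_nonneg _) (habsG1 _)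
  have hG2meas : Measurable G2 := by
    have hj : StronglyMeasurable fun p : ℝ × ℝ => S p.2 * (if p.1 < p.2 then (1:ℝ) else 0) :=
      Measurable.stronglyMeasurable <| (hSmeas.comp measurable_snd).mul
        (Measurable.ite (measurableSet_lt measurable_fst measurable_snd)
          measurable_const measurable_const)
    exact hj.integral_prod_right'.measurable
  have intG2 : Integrable (fun x : ℝ × ℝ => (x.1 - x.2) * G2 x.1) mu := by
    apply integrable_of_bound (((measurable_fst.sub measurable_snd).mul
      (hG2meas.comp measurable_fst)).aestronglyMeasurable) 1
    filter_upwards [hb] with x hx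
    simp only [Pi.mul_apply, Pi.sub_apply, Function.comp_apply]; rw [abs_mul]
    exact mul_le_one₀ hx (abs_nonneg _) (habsG2 _)
  have intc0 : Integrable (fun x : ℝ × ℝ => x.1 - x.2) mu :=
    integrable_of_bound ((measurable_fst.sub measurable_snd).aestronglyMeasurable) 1 hb
  -- main identity
  set T : ℝ := ∫ q, S q ∂rho01 with hTdef
  have pw : ∀ x : ℝ × ℝ, (x.1 - x.2) * wh x.1
      = ((1/2) * ((x.1 - x.2) * G1 x.1) - (1/2) * ((x.1 - x.2) * G2 x.1))
        + ((T/2 + Cc) * (x.1 - x.2)) := by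
    intro x
    have h2 := key2 x.1
    have hG2v : G2 x.1 = T - G1 x.1 := by rw [hTdef]; linarith
    rw [hwhdef]
    simp only []
    rw [hG2v]
    ring
  have e2 : ∫ x, (x.1 - x.2) * wh x.1 ∂mu
      = (1/2) * (∫ x, (x.1 - x.2) * G1 x.1 ∂mu)
        - (1/2) * (∫ x, (x.1 - x.2) * G2 x.1 ∂mu)
        + (T/2 + Cc) * (∫ x, (x.1 - x.2) ∂mu) := by
    simp_rw [pw]
    have i1 : Integrable (fun x : ℝ × ℝ =>
        (1/2) * ((x.1 - x.2) * G1 x.1) - (1/2) * ((x.1 - x.2) * G2 x.1)) mu :=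
      (intG1.const_mul _).sub (intG2.const_mul _)
    rw [integral_add i1 (intc0.const_mul _),
      integral_sub (intG1.const_mul _) (intG2.const_mul _),
      integral_const_mul, integral_const_mul, integral_const_mul]
  have f1 : ∫ x, (x.1 - x.2) * G1 x.1 ∂mu = ∫ q, S q * binPos mu q ∂rho01 :=
    fubini_pos hb hSmeas hS1
  have f2 : ∫ x, (x.1 - x.2) * G2 x.1 ∂mu = ∫ q, S q * binNeg mu q ∂rho01 :=
    fubini_neg hb hSmeas hS1
  -- bounds on the three terms
  have intAbsPos : Integrable (fun q => |binPos mu q|) rho01 :=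
    integrable_of_bound (binPos_smeas.measurable.abs.aestronglyMeasurable) 1
      (Filter.Eventually.of_forall fun q => by
        rw [abs_abs]; exact binPos_abs_le hb q)
  have intAbsNeg : Integrable (fun q => |binNeg mu q|) rho01 :=
    integrable_of_bound (binNeg_smeas.measurable.abs.aestronglyMeasurable) 1
      (Filter.Eventually.of_forall fun q => by
        rw [abs_abs]; exact binNeg_abs_le hb q)
  have hF1 : |∫ q, S q * binPos mu q ∂rho01| ≤ ∫ q, |binPos mu q| ∂rho01 := by
    have step1 : |∫ q, S q * binPos mu q ∂rho01| ≤ ∫ q, |S q| * |binPos mu q| ∂rho01 := by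
      simpa [Real.norm_eq_abs] using
        norm_integral_le_integral_norm (μ := rho01) (fun q => S q * binPos mu q)
    refine le_trans step1 (integral_mono ?_ intAbsPos ?_)
    · exact integrable_of_bound ((hSmeas.abs.mul binPos_smeas.measurable.abs).aestronglyMeasurable) 1
        (Filter.Eventually.of_forall fun q => by
          rw [abs_of_nonneg (mul_nonneg (abs_nonneg _) (abs_nonneg _))]
          exact mul_le_one₀ (hS1 q) (abs_nonneg _) (binPos_abs_le hb q))
    · intro q
      exact mul_le_of_le_one_left (abs_nonneg _) (hS1 q)
  have hF2 : |∫ q, S q * binNeg mu q ∂rho01| ≤ ∫ q, |binNeg mu q| ∂rho01 := by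
    have step1 : |∫ q, S q * binNeg mu q ∂rho01| ≤ ∫ q, |S q| * |binNeg mu q| ∂rho01 := by
      simpa [Real.norm_eq_abs] using
        norm_integral_le_integral_norm (μ := rho01) (fun q => S q * binNeg mu q)
    refine le_trans step1 (integral_mono ?_ intAbsNeg ?_)
    · exact integrable_of_bound ((hSmeas.abs.mul binNeg_smeas.measurable.abs).aestronglyMeasurable) 1
        (Filter.Eventually.of_forall fun q => by
          rw [abs_of_nonneg (mul_nonneg (abs_nonneg _) (abs_nonneg _))]
          exact mul_le_one₀ (hS1 q) (abs_nonneg _) (binNeg_abs_le hb q))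
    · intro q
      exact mul_le_of_le_one_left (abs_nonneg _) (hS1 q)
  -- bound on the constant coefficient
  have hG10 : G1 0 = 0 := by
    rw [hG1def]
    simp only []
    apply integral_eq_zero_of_ae
    filter_upwards [ae_restrict_mem measurableSet_Ioc] with q hq
    rw [if_neg (not_le.mpr hq.1), mul_zero]
    rfl
  have hG21 : G2 1 = 0 := by
    rw [hG2def]
    simp only []
    apply integral_eq_zero_of_ae
    filter_upwards [ae_restrict_mem measurableSet_Ioc] with q hq
    rw [if_neg (not_lt.mpr hq.2), mul_zero]
    rfl
  have hTc : |T/2 + Cc| ≤ 1 := by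
    have hT1 : T = G1 1 := by
      have := key2 1
      rw [hG21] at this
      rw [hTdef]
      linarith
    have heq : T/2 + Cc = (wh 0 + wh 1)/2 := by
      have h0 : wh 0 = Cc := by rw [hwhdef]; simp only []; rw [hG10]; ring
      have h1 : wh 1 = G1 1 + Cc := by rw [hwhdef]
      rw [h0, h1, ← hT1]
      ring
    rw [heq]
    have b0 := hwh_bd 0 ⟨le_refl 0, zero_le_one⟩
    have b1 := hwh_bd 1 ⟨zero_le_one, le_refl 1⟩
    have habs := abs_add_le (wh 0) (wh 1)
    have hd : |(wh 0 + wh 1)/2| = |wh 0 + wh 1|/2 := by rw [abs_div, abs_two]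
    rw [hd]
    linarith
  -- conclusion
  have e0 : ∫ x, (x.1 - x.2) * w x.1 ∂mu = ∫ x, (x.1 - x.2) * Wc x.1 ∂mu := by
    apply integral_congr_ae
    filter_upwards [hsupp] with x hx
    rw [hWeq _ hx.1]
  have e1 : |(∫ x, (x.1 - x.2) * Wc x.1 ∂mu) - ∫ x, (x.1 - x.2) * wh x.1 ∂mu| ≤ h := by
    rw [← integral_sub intWc intwh]
    apply abs_integral_le
    filter_upwards [hb, hsupp] with x hx hx2
    have hrw : (x.1 - x.2) * Wc x.1 - (x.1 - x.2) * wh x.1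
        = (x.1 - x.2) * (Wc x.1 - wh x.1) := by ring
    rw [hrw, abs_mul]
    have hcl : |Wc x.1 - wh x.1| ≤ h := by rw [abs_sub_comm]; exact hwh_close _ hx2.1
    calc |x.1 - x.2| * |Wc x.1 - wh x.1| ≤ 1 * h := mul_le_mul hx hcl (abs_nonneg _) zero_le_one
      _ = h := one_mul h
  have hc0 : |∫ x, (x.1 - x.2) ∂mu| ≤ l1ATB mu := abs_c0_le_l1ATB hb
  have hsplit : (∫ q, |binNeg mu q| ∂rho01) + (∫ q, |binPos mu q| ∂rho01) = l1ATB mu := by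
    rw [l1ATB_eq, integral_add intAbsNeg intAbsPos]
  have hV : ∫ x, (x.1 - x.2) * wh x.1 ∂mu ≤ 3/2 * l1ATB mu := by
    rw [e2, f1, f2]
    have u1 := le_abs_self (∫ q, S q * binPos mu q ∂rho01)
    have u2 := neg_abs_le (∫ q, S q * binNeg mu q ∂rho01)
    have t3 : (T/2 + Cc) * (∫ x, (x.1 - x.2) ∂mu) ≤ l1ATB mu := by
      calc (T/2 + Cc) * (∫ x, (x.1 - x.2) ∂mu)
          ≤ |(T/2 + Cc) * ∫ x, (x.1 - x.2) ∂mu| := le_abs_self _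
        _ = |T/2 + Cc| * |∫ x, (x.1 - x.2) ∂mu| := abs_mul _ _
        _ ≤ 1 * l1ATB mu := mul_le_mul hTc hc0 (abs_nonneg _) zero_le_one
        _ = l1ATB mu := one_mul _
    linarith
  have efin := (abs_sub_le_iff.mp e1).1
  calc ∫ x, (x.1 - x.2) * w x.1 ∂mu = ∫ x, (x.1 - x.2) * Wc x.1 ∂mu := e0
    _ ≤ (∫ x, (x.1 - x.2) * wh x.1 ∂mu) + h := by linarith
    _ ≤ 3/2 * l1ATB mu + h := by linarith

end Part1

section Part1b

variable {mu : Measure (ℝ × ℝ)} [IsProbabilityMeasure mu]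

lemma part1 (hsupp : ∀ᵐ x ∂mu, x.1 ∈ Set.Icc (0:ℝ) 1 ∧ (x.2 = 0 ∨ x.2 = 1)) :
    smCal mu ≤ 3/2 * l1ATB mu := by
  apply Real.sSup_le
  · rintro c ⟨w, hlip, hbdw, rfl⟩
    by_contra hlt
    push_neg at hlt
    have hh : (0:ℝ) < ((∫ x, (x.1 - x.2) * w x.1 ∂mu) - 3/2 * l1ATB mu)/2 := by linarith
    have := part1_eps hsupp hlip hbdw hh
    linarith
  · exact mul_nonneg (by norm_num) l1ATB_nonneg

end Part1b

section Part2

lemma ind_sub_abs_le (b c : Prop) [Decidable b] [Decidable c] :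
    |(if b then (1:ℝ) else 0) - (if c then 1 else 0)| ≤ 1 := by
  split_ifs <;> norm_num

variable {mu : Measure (ℝ × ℝ)} [IsProbabilityMeasure mu]

lemma coupling_nonempty (hsupp : ∀ᵐ x ∂mu, x.1 ∈ Set.Icc (0:ℝ) 1 ∧ (x.2 = 0 ∨ x.2 = 1)) :
    Set.Nonempty { c : ℝ | ∃ P : Measure (ℝ × ℝ × ℝ), IsProbabilityMeasure P ∧
      P.map (fun x => x.2) = mu ∧ Calibrated (P.map (fun x => (x.1, x.2.2))) ∧
      (∀ᵐ x ∂P, x.1 ∈ Set.Icc (0:ℝ) 1) ∧ c = ∫ x, |x.1 - x.2.1| ∂P } := by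
  set g : ℝ × ℝ → ℝ × ℝ × ℝ := fun p => (p.2, p) with hg
  have hgm : Measurable g := measurable_snd.prodMk measurable_id
  refine ⟨∫ x, |x.1 - x.2.1| ∂(mu.map g), mu.map g,
    Measure.isProbabilityMeasure_map hgm.aemeasurable, ?_, ?_, ?_, rfl⟩
  · rw [Measure.map_map measurable_snd hgm]
    exact Measure.map_id
  · have hkm : Measurable fun x : ℝ × ℝ × ℝ => (x.1, x.2.2) :=
      measurable_fst.prodMk measurable_snd.snd
    rw [Measure.map_map hkm hgm]
    intro s hs
    have hcomp : ((fun x : ℝ × ℝ × ℝ => (x.1, x.2.2)) ∘ g) = fun p : ℝ × ℝ => (p.2, p.2) := rfl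
    rw [hcomp]
    have hm2 : Measurable fun p : ℝ × ℝ => (p.2, p.2) := measurable_snd.prodMk measurable_snd
    rw [setIntegral_map (hs.preimage measurable_fst)
        measurable_snd.aestronglyMeasurable hm2.aemeasurable,
      setIntegral_map (hs.preimage measurable_fst)
        measurable_fst.aestronglyMeasurable hm2.aemeasurable]
  · rw [ae_map_iff hgm.aemeasurable (measurableSet_Icc.preimage measurable_fst)]
    filter_upwards [hsupp] with p hp
    rcases hp.2 with h | h <;> show p.2 ∈ Set.Icc (0:ℝ) 1 <;> rw [h] <;> exact ⟨by norm_num, by norm_num⟩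

lemma part2_bound (hsupp : ∀ᵐ x ∂mu, x.1 ∈ Set.Icc (0:ℝ) 1 ∧ (x.2 = 0 ∨ x.2 = 1))
    {P : Measure (ℝ × ℝ × ℝ)} (hPprob : IsProbabilityMeasure P)
    (hmap : P.map (fun x => x.2) = mu) (hcal : Calibrated (P.map (fun x => (x.1, x.2.2))))
    (hu : ∀ᵐ x ∂P, x.1 ∈ Set.Icc (0:ℝ) 1) :
    l1ATB mu ≤ 3 * ∫ x, |x.1 - x.2.1| ∂P := by
  haveI := hPprob
  have hPsupp : ∀ᵐ x ∂P, x.2.1 ∈ Set.Icc (0:ℝ) 1 ∧ (x.2.2 = 0 ∨ x.2.2 = 1) := by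
    have hms : MeasurableSet {y : ℝ × ℝ | y.1 ∈ Set.Icc (0:ℝ) 1 ∧ (y.2 = 0 ∨ y.2 = 1)} := by
      have h1 : MeasurableSet {y : ℝ × ℝ | y.1 ∈ Set.Icc (0:ℝ) 1} :=
        measurableSet_Icc.preimage measurable_fst
      have h2 : MeasurableSet {y : ℝ × ℝ | y.2 = (0:ℝ)} :=
        (measurableSet_singleton 0).preimage measurable_snd
      have h3 : MeasurableSet {y : ℝ × ℝ | y.2 = (1:ℝ)} :=
        (measurableSet_singleton 1).preimage measurable_snd
      exact h1.inter (h2.union h3)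
    exact (ae_map_iff measurable_snd.aemeasurable hms).mp (by rw [hmap]; exact hsupp)
  -- a.e. bounds
  have hDuy : ∀ᵐ x ∂P, |x.1 - x.2.2| ≤ 1 := by
    filter_upwards [hu, hPsupp] with x h1 h2
    rcases h2.2 with h | h <;> rw [h, abs_le] <;>
      exact ⟨by linarith [h1.1, h1.2], by linarith [h1.1, h1.2]⟩
  have hDvy : ∀ᵐ x ∂P, |x.2.1 - x.2.2| ≤ 1 := by
    filter_upwards [hPsupp] with x h2
    rcases h2.2 with h | h <;> rw [h, abs_le] <;>
      exact ⟨by linarith [h2.1.1, h2.1.2], by linarith [h2.1.1, h2.1.2]⟩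
  have hDvu : ∀ᵐ x ∂P, |x.2.1 - x.1| ≤ 1 := by
    filter_upwards [hu, hPsupp] with x h1 h2
    rw [abs_le]
    exact ⟨by linarith [h1.1, h1.2, h2.1.1, h2.1.2], by linarith [h1.1, h1.2, h2.1.1, h2.1.2]⟩
  have hDuv : ∀ᵐ x ∂P, |x.1 - x.2.1| ≤ 1 := by
    filter_upwards [hDvu] with x h1
    rw [abs_sub_comm]; exact h1
  -- express bins through the coupling
  have hbinNeg : ∀ q, binNeg mu q = ∫ x, (x.2.1 - x.2.2) * (if x.2.1 < q then 1 else 0) ∂P := by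
    intro q
    rw [binNeg, ← hmap,
      integral_map measurable_snd.aemeasurable (meas_fneg q).aestronglyMeasurable]
  have hbinPos : ∀ q, binPos mu q = ∫ x, (x.2.1 - x.2.2) * (if q ≤ x.2.1 then 1 else 0) ∂P := by
    intro q
    rw [binPos, ← hmap,
      integral_map measurable_snd.aemeasurable (meas_fpos q).aestronglyMeasurable]
  -- global integrable coordinates
  have hIu : Integrable (fun x : ℝ × ℝ × ℝ => x.1) P := by
    apply integrable_of_bound measurable_fst.aestronglyMeasurable 1
    filter_upwards [hu] with x hx
    rw [abs_le]; exact ⟨by linarith [hx.1], hx.2⟩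
  have hIy : Integrable (fun x : ℝ × ℝ × ℝ => x.2.2) P := by
    apply integrable_of_bound measurable_snd.snd.aestronglyMeasurable 1
    filter_upwards [hPsupp] with x hx
    rcases hx.2 with h | h <;> rw [h, abs_le] <;> exact ⟨by norm_num, by norm_num⟩
  -- calibration kills the u-bins
  have hkm : Measurable fun x : ℝ × ℝ × ℝ => (x.1, x.2.2) :=
    measurable_fst.prodMk measurable_snd.snd
  have hzneg : ∀ q, ∫ x, (x.1 - x.2.2) * (if x.1 < q then 1 else 0) ∂P = 0 := by
    intro q
    have hc := hcal (Set.Iio q) measurableSet_Iio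
    rw [setIntegral_map (measurableSet_Iio.preimage measurable_fst)
        measurable_snd.aestronglyMeasurable hkm.aemeasurable,
      setIntegral_map (measurableSet_Iio.preimage measurable_fst)
        measurable_fst.aestronglyMeasurable hkm.aemeasurable] at hc
    have hset : MeasurableSet {x : ℝ × ℝ × ℝ | x.1 < q} :=
      measurableSet_lt measurable_fst measurable_const
    have hind : (fun x : ℝ × ℝ × ℝ => (x.1 - x.2.2) * (if x.1 < q then (1:ℝ) else 0))
        = Set.indicator {x : ℝ × ℝ × ℝ | x.1 < q} (fun x => x.1 - x.2.2) := by
      funext x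
      rw [Set.indicator_apply]
      by_cases hx : x ∈ {x : ℝ × ℝ × ℝ | x.1 < q}
      · rw [if_pos hx, if_pos (show x.1 < q from hx), mul_one]
      · rw [if_neg hx, if_neg (show ¬ x.1 < q from hx), mul_zero]
    rw [hind, integral_indicator hset,
      integral_sub hIu.integrableOn hIy.integrableOn]
    have hc' : ∫ x in {x : ℝ × ℝ × ℝ | x.1 < q}, x.2.2 ∂P
        = ∫ x in {x : ℝ × ℝ × ℝ | x.1 < q}, x.1 ∂P := hc
    rw [hc', sub_self]
  have hzpos : ∀ q, ∫ x, (x.1 - x.2.2) * (if q ≤ x.1 then 1 else 0) ∂P = 0 := by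
    intro q
    have hc := hcal (Set.Ici q) measurableSet_Ici
    rw [setIntegral_map (measurableSet_Ici.preimage measurable_fst)
        measurable_snd.aestronglyMeasurable hkm.aemeasurable,
      setIntegral_map (measurableSet_Ici.preimage measurable_fst)
        measurable_fst.aestronglyMeasurable hkm.aemeasurable] at hc
    have hset : MeasurableSet {x : ℝ × ℝ × ℝ | q ≤ x.1} :=
      measurableSet_le measurable_const measurable_fst
    have hind : (fun x : ℝ × ℝ × ℝ => (x.1 - x.2.2) * (if q ≤ x.1 then (1:ℝ) else 0))
        = Set.indicator {x : ℝ × ℝ × ℝ | q ≤ x.1} (fun x => x.1 - x.2.2) := by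
      funext x
      rw [Set.indicator_apply]
      by_cases hx : x ∈ {x : ℝ × ℝ × ℝ | q ≤ x.1}
      · rw [if_pos hx, if_pos (show q ≤ x.1 from hx), mul_one]
      · rw [if_neg hx, if_neg (show ¬ q ≤ x.1 from hx), mul_zero]
    rw [hind, integral_indicator hset,
      integral_sub hIu.integrableOn hIy.integrableOn]
    have hc' : ∫ x in {x : ℝ × ℝ × ℝ | q ≤ x.1}, x.2.2 ∂P
        = ∫ x in {x : ℝ × ℝ × ℝ | q ≤ x.1}, x.1 ∂P := hc
    rw [hc', sub_self]
  -- the decomposition pieces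
  set A1 : ℝ → ℝ := fun q => ∫ x, (x.2.1 - x.1) * (if x.2.1 < q then (1:ℝ) else 0) ∂P with hA1def
  set A2 : ℝ → ℝ := fun q => ∫ x, (x.2.1 - x.1) * (if q ≤ x.2.1 then (1:ℝ) else 0) ∂P with hA2def
  set Bf : ℝ → ℝ := fun q => ∫ x, (x.1 - x.2.2)
    * ((if x.2.1 < q then (1:ℝ) else 0) - (if x.1 < q then 1 else 0)) ∂P with hBdef
  have iA1 : ∀ q, Integrable
      (fun x : ℝ × ℝ × ℝ => (x.2.1 - x.1) * (if x.2.1 < q then (1:ℝ) else 0)) P := by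
    intro q
    apply integrable_of_bound (((measurable_snd.fst.sub measurable_fst).mul
      (Measurable.ite (measurableSet_lt measurable_snd.fst measurable_const)
        measurable_const measurable_const)).aestronglyMeasurable) 1
    filter_upwards [hDvu] with x hx
    simp only [Pi.mul_apply, Pi.sub_apply, Function.comp_apply]; rw [abs_mul]
    exact mul_le_one₀ hx (abs_nonneg _) (ind_abs_le _)
  have iA2 : ∀ q, Integrable
      (fun x : ℝ × ℝ × ℝ => (x.2.1 - x.1) * (if q ≤ x.2.1 then (1:ℝ) else 0)) P := by
    intro q
    apply integrable_of_bound (((measurable_snd.fst.sub measurable_fst).mul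
      (Measurable.ite (measurableSet_le measurable_const measurable_snd.fst)
        measurable_const measurable_const)).aestronglyMeasurable) 1
    filter_upwards [hDvu] with x hx
    simp only [Pi.mul_apply, Pi.sub_apply, Function.comp_apply]; rw [abs_mul]
    exact mul_le_one₀ hx (abs_nonneg _) (ind_abs_le _)
  have iMidNeg : ∀ q, Integrable
      (fun x : ℝ × ℝ × ℝ => (x.1 - x.2.2) * (if x.1 < q then (1:ℝ) else 0)) P := by
    intro q
    apply integrable_of_bound (((measurable_fst.sub measurable_snd.snd).mul
      (Measurable.ite (measurableSet_lt measurable_fst measurable_const)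
        measurable_const measurable_const)).aestronglyMeasurable) 1
    filter_upwards [hDuy] with x hx
    simp only [Pi.mul_apply, Pi.sub_apply, Function.comp_apply]; rw [abs_mul]
    exact mul_le_one₀ hx (abs_nonneg _) (ind_abs_le _)
  have iMidPos : ∀ q, Integrable
      (fun x : ℝ × ℝ × ℝ => (x.1 - x.2.2) * (if q ≤ x.1 then (1:ℝ) else 0)) P := by
    intro q
    apply integrable_of_bound (((measurable_fst.sub measurable_snd.snd).mul
      (Measurable.ite (measurableSet_le measurable_const measurable_fst)
        measurable_const measurable_const)).aestronglyMeasurable) 1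
    filter_upwards [hDuy] with x hx
    simp only [Pi.mul_apply, Pi.sub_apply, Function.comp_apply]; rw [abs_mul]
    exact mul_le_one₀ hx (abs_nonneg _) (ind_abs_le _)
  have iB : ∀ q, Integrable (fun x : ℝ × ℝ × ℝ => (x.1 - x.2.2)
      * ((if x.2.1 < q then (1:ℝ) else 0) - (if x.1 < q then 1 else 0))) P := by
    intro q
    apply integrable_of_bound (((measurable_fst.sub measurable_snd.snd).mul
      ((Measurable.ite (measurableSet_lt measurable_snd.fst measurable_const)
        measurable_const measurable_const).sub
       (Measurable.ite (measurableSet_lt measurable_fst measurable_const)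
        measurable_const measurable_const))).aestronglyMeasurable) 1
    filter_upwards [hDuy] with x hx
    simp only [Pi.mul_apply, Pi.sub_apply, Function.comp_apply]; rw [abs_mul]
    exact mul_le_one₀ hx (abs_nonneg _) (ind_sub_abs_le _ _)
  have hdecompNeg : ∀ q, binNeg mu q = A1 q + Bf q := by
    intro q
    rw [hbinNeg q]
    have pw : ∀ x : ℝ × ℝ × ℝ, (x.2.1 - x.2.2) * (if x.2.1 < q then (1:ℝ) else 0)
        = (x.2.1 - x.1) * (if x.2.1 < q then 1 else 0)
          + ((x.1 - x.2.2) * (if x.1 < q then 1 else 0)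
            + (x.1 - x.2.2) * ((if x.2.1 < q then (1:ℝ) else 0)
              - (if x.1 < q then 1 else 0))) := by
      intro x; ring
    simp_rw [pw]
    have i23 : Integrable (fun x : ℝ × ℝ × ℝ =>
        (x.1 - x.2.2) * (if x.1 < q then (1:ℝ) else 0)
          + (x.1 - x.2.2) * ((if x.2.1 < q then (1:ℝ) else 0)
            - (if x.1 < q then 1 else 0))) P := (iMidNeg q).add (iB q)
    rw [integral_add (iA1 q) i23, integral_add (iMidNeg q) (iB q),
      hzneg q, zero_add]
  have hdecompPos : ∀ q, binPos mu q = A2 q - Bf q := by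
    intro q
    rw [hbinPos q]
    have hindrw : ∀ t : ℝ, (if q ≤ t then (1:ℝ) else 0) = 1 - (if t < q then 1 else 0) := by
      intro t
      rcases lt_or_ge t q with h | h
      · rw [if_neg (not_le.mpr h), if_pos h]; norm_num
      · rw [if_pos h, if_neg (not_lt.mpr h)]; norm_num
    have pw : ∀ x : ℝ × ℝ × ℝ, (x.2.1 - x.2.2) * (if q ≤ x.2.1 then (1:ℝ) else 0)
        = (x.2.1 - x.1) * (if q ≤ x.2.1 then 1 else 0)
          + ((x.1 - x.2.2) * (if q ≤ x.1 then 1 else 0)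
            + -((x.1 - x.2.2) * ((if x.2.1 < q then (1:ℝ) else 0)
              - (if x.1 < q then 1 else 0)))) := by
      intro x
      rw [hindrw x.2.1, hindrw x.1]
      ring
    simp_rw [pw]
    have iBneg : Integrable (fun x : ℝ × ℝ × ℝ =>
        -((x.1 - x.2.2) * ((if x.2.1 < q then (1:ℝ) else 0)
          - (if x.1 < q then 1 else 0)))) P := by exact (iB q).neg
    have i23 : Integrable (fun x : ℝ × ℝ × ℝ =>
        (x.1 - x.2.2) * (if q ≤ x.1 then (1:ℝ) else 0)
          + -((x.1 - x.2.2) * ((if x.2.1 < q then (1:ℝ) else 0)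
            - (if x.1 < q then 1 else 0)))) P := (iMidPos q).add iBneg
    rw [integral_add (iA2 q) i23, integral_add (iMidPos q) iBneg,
      hzpos q, integral_neg, zero_add, sub_eq_add_neg]
  set D : ℝ := ∫ x, |x.1 - x.2.1| ∂P with hDdef
  have hA12 : ∀ q, |A1 q| + |A2 q| ≤ D := by
    intro q
    have n1 : |A1 q| ≤ ∫ x, |(x.2.1 - x.1) * (if x.2.1 < q then (1:ℝ) else 0)| ∂P := by
      simpa only [Real.norm_eq_abs] using norm_integral_le_integral_norm (μ := P)
        (fun x : ℝ × ℝ × ℝ => (x.2.1 - x.1) * (if x.2.1 < q then (1:ℝ) else 0))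
    have n2 : |A2 q| ≤ ∫ x, |(x.2.1 - x.1) * (if q ≤ x.2.1 then (1:ℝ) else 0)| ∂P := by
      simpa only [Real.norm_eq_abs] using norm_integral_le_integral_norm (μ := P)
        (fun x : ℝ × ℝ × ℝ => (x.2.1 - x.1) * (if q ≤ x.2.1 then (1:ℝ) else 0))
    have j1 : Integrable
        (fun x : ℝ × ℝ × ℝ => |(x.2.1 - x.1) * (if x.2.1 < q then (1:ℝ) else 0)|) P :=
      (iA1 q).abs
    have j2 : Integrable
        (fun x : ℝ × ℝ × ℝ => |(x.2.1 - x.1) * (if q ≤ x.2.1 then (1:ℝ) else 0)|) P :=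
      (iA2 q).abs
    have hsum : (∫ x, |(x.2.1 - x.1) * (if x.2.1 < q then (1:ℝ) else 0)| ∂P)
        + (∫ x, |(x.2.1 - x.1) * (if q ≤ x.2.1 then (1:ℝ) else 0)| ∂P) = D := by
      rw [← integral_add j1 j2, hDdef]
      apply integral_congr_ae
      refine Filter.Eventually.of_forall fun x => ?_
      show |(x.2.1 - x.1) * (if x.2.1 < q then (1:ℝ) else 0)|
        + |(x.2.1 - x.1) * (if q ≤ x.2.1 then (1:ℝ) else 0)| = |x.1 - x.2.1|
      rcases lt_or_ge x.2.1 q with h | h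
      · rw [if_pos h, if_neg (not_le.mpr h), mul_one, mul_zero, abs_zero, add_zero,
          abs_sub_comm]
      · rw [if_neg (not_lt.mpr h), if_pos h, mul_zero, mul_one, abs_zero, zero_add,
          abs_sub_comm]
    linarith
  have hpt : ∀ q, |binNeg mu q| + |binPos mu q| ≤ D + 2 * |Bf q| := by
    intro q
    rw [hdecompNeg q, hdecompPos q]
    have u1 := abs_add_le (A1 q) (Bf q)
    have u2 : |A2 q - Bf q| ≤ |A2 q| + |Bf q| := by
      rw [sub_eq_add_neg]
      exact le_trans (abs_add_le _ _) (by rw [abs_neg])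
    linarith [hA12 q]
  -- bound the integral of |Bf| by D
  have hBmeas : Measurable Bf := by
    have hj : StronglyMeasurable fun p : ℝ × (ℝ × ℝ × ℝ) => (p.2.1 - p.2.2.2)
        * ((if p.2.2.1 < p.1 then (1:ℝ) else 0) - (if p.2.1 < p.1 then 1 else 0)) := by
      apply Measurable.stronglyMeasurable
      exact (measurable_snd.fst.sub measurable_snd.snd.snd).mul
        ((Measurable.ite (measurableSet_lt measurable_snd.snd.fst measurable_fst)
            measurable_const measurable_const).sub
          (Measurable.ite (measurableSet_lt measurable_snd.fst measurable_fst)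
            measurable_const measurable_const))
    exact hj.integral_prod_right'.measurable
  have hBabs : ∀ q, |Bf q| ≤ 1 := by
    intro q
    apply abs_integral_le
    filter_upwards [hDuy] with x hx
    rw [abs_mul]
    exact mul_le_one₀ hx (abs_nonneg _) (ind_sub_abs_le _ _)
  have intAbsB : Integrable (fun q => |Bf q|) rho01 :=
    integrable_of_bound (hBmeas.abs.aestronglyMeasurable) 1
      (Filter.Eventually.of_forall fun q => by rw [abs_abs]; exact hBabs q)
  have hbmu : ∀ᵐ x ∂mu, |x.1 - x.2| ≤ 1 := ae_abs_sub_le hsupp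
  -- the Fubini bound on ∫ |Bf|
  have huyabs : Integrable (fun x : ℝ × ℝ × ℝ => |x.1 - x.2.2|) P :=
    integrable_of_bound ((measurable_fst.sub measurable_snd.snd).abs.aestronglyMeasurable) 1
      (by simpa using hDuy)
  have hFmeas : Measurable (Function.uncurry fun (q : ℝ) (x : ℝ × ℝ × ℝ) =>
      |x.1 - x.2.2| * |(if x.2.1 < q then (1:ℝ) else 0) - (if x.1 < q then 1 else 0)|) :=
    (measurable_snd.fst.sub measurable_snd.snd.snd).abs.mul
      ((Measurable.ite (measurableSet_lt measurable_snd.snd.fst measurable_fst)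
          measurable_const measurable_const).sub
        (Measurable.ite (measurableSet_lt measurable_snd.fst measurable_fst)
          measurable_const measurable_const)).abs
  have hswapint : Integrable (Function.uncurry fun (q : ℝ) (x : ℝ × ℝ × ℝ) =>
      |x.1 - x.2.2| * |(if x.2.1 < q then (1:ℝ) else 0) - (if x.1 < q then 1 else 0)|)
      (rho01.prod P) := by
    apply Integrable.mono' (g := fun p : ℝ × (ℝ × ℝ × ℝ) => (1:ℝ) * |p.2.1 - p.2.2.2|)
      ((integrable_const 1).mul_prod huyabs) hFmeas.aestronglyMeasurable
    refine Filter.Eventually.of_forall fun p => ?_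
    rw [one_mul, Function.uncurry, Real.norm_eq_abs,
      abs_of_nonneg (mul_nonneg (abs_nonneg _) (abs_nonneg _))]
    exact mul_le_of_le_one_right (abs_nonneg _) (ind_sub_abs_le _ _)
  have hswap := integral_integral_swap hswapint
  have hFq : ∀ q, |Bf q| ≤ ∫ x, |x.1 - x.2.2|
      * |(if x.2.1 < q then (1:ℝ) else 0) - (if x.1 < q then 1 else 0)| ∂P := by
    intro q
    have := norm_integral_le_integral_norm (μ := P) (fun x : ℝ × ℝ × ℝ => (x.1 - x.2.2)
      * ((if x.2.1 < q then (1:ℝ) else 0) - (if x.1 < q then 1 else 0)))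
    simpa only [Real.norm_eq_abs, abs_mul] using this
  have hRmeas : StronglyMeasurable fun q => ∫ x, |x.1 - x.2.2|
      * |(if x.2.1 < q then (1:ℝ) else 0) - (if x.1 < q then 1 else 0)| ∂P :=
    hFmeas.stronglyMeasurable.integral_prod_right'
  have hRbd : ∀ q, |∫ x, |x.1 - x.2.2|
      * |(if x.2.1 < q then (1:ℝ) else 0) - (if x.1 < q then 1 else 0)| ∂P| ≤ 1 := by
    intro q
    apply abs_integral_le
    filter_upwards [hDuy] with x hx
    rw [abs_of_nonneg (mul_nonneg (abs_nonneg _) (abs_nonneg _))]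
    exact mul_le_one₀ hx (abs_nonneg _) (ind_sub_abs_le _ _)
  have hRint : Integrable (fun q => ∫ x, |x.1 - x.2.2|
      * |(if x.2.1 < q then (1:ℝ) else 0) - (if x.1 < q then 1 else 0)| ∂P) rho01 :=
    integrable_of_bound hRmeas.aestronglyMeasurable 1
      (Filter.Eventually.of_forall hRbd)
  have hInnerMeas : StronglyMeasurable fun x : ℝ × ℝ × ℝ => ∫ q, |x.1 - x.2.2|
      * |(if x.2.1 < q then (1:ℝ) else 0) - (if x.1 < q then 1 else 0)| ∂rho01 :=
    hFmeas.stronglyMeasurable.integral_prod_left'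
  have hInner_le : ∀ᵐ x ∂P, (∫ q, |x.1 - x.2.2|
      * |(if x.2.1 < q then (1:ℝ) else 0) - (if x.1 < q then 1 else 0)| ∂rho01)
        ≤ |x.1 - x.2.1| := by
    filter_upwards [hDuy] with x hx
    rw [integral_const_mul]
    have hdel : (∫ q, |(if x.2.1 < q then (1:ℝ) else 0) - (if x.1 < q then 1 else 0)| ∂rho01)
        ≤ |x.1 - x.2.1| := by
      have hptw : ∀ q, |(if x.2.1 < q then (1:ℝ) else 0) - (if x.1 < q then 1 else 0)|
          ≤ Set.indicator (Set.Ioc (min x.1 x.2.1) (max x.1 x.2.1)) (fun _ => (1:ℝ)) q := by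
        intro q
        rcases le_or_gt q (min x.1 x.2.1) with h | h
        · rw [Set.indicator_of_notMem (by
            intro hmem
            exact absurd hmem.1 (not_lt.mpr h))]
          rw [if_neg (not_lt.mpr (le_trans h (min_le_right _ _))),
            if_neg (not_lt.mpr (le_trans h (min_le_left _ _))), sub_self, abs_zero]
        · rcases le_or_gt q (max x.1 x.2.1) with h2 | h2
          · rw [Set.indicator_of_mem (Set.mem_Ioc.mpr ⟨h, h2⟩)]
            exact ind_sub_abs_le _ _
          · rw [Set.indicator_of_notMem (by
              intro hmem
              exact absurd hmem.2 (not_le.mpr h2))]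
            rw [if_pos (lt_of_le_of_lt (le_max_right x.1 x.2.1) h2),
              if_pos (lt_of_le_of_lt (le_max_left x.1 x.2.1) h2), sub_self, abs_zero]
      have hintd : Integrable (fun q =>
          |(if x.2.1 < q then (1:ℝ) else 0) - (if x.1 < q then 1 else 0)|) rho01 := by
        apply integrable_of_bound ?_ 1
          (Filter.Eventually.of_forall fun q => by rw [abs_abs]; exact ind_sub_abs_le _ _)
        exact ((Measurable.ite (measurableSet_lt measurable_const measurable_id)
            measurable_const measurable_const).sub
          (Measurable.ite (measurableSet_lt measurable_const measurable_id)
            measurable_const measurable_const)).abs.aestronglyMeasurable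
      have hiind : Integrable
          (Set.indicator (Set.Ioc (min x.1 x.2.1) (max x.1 x.2.1)) (fun _ => (1:ℝ))) rho01 :=
        (integrable_const 1).indicator measurableSet_Ioc
      calc (∫ q, |(if x.2.1 < q then (1:ℝ) else 0) - (if x.1 < q then 1 else 0)| ∂rho01)
          ≤ ∫ q, Set.indicator (Set.Ioc (min x.1 x.2.1) (max x.1 x.2.1))
              (fun _ => (1:ℝ)) q ∂rho01 := integral_mono hintd hiind hptw
        _ = (rho01 (Set.Ioc (min x.1 x.2.1) (max x.1 x.2.1))).toReal := by
            rw [integral_indicator_const _ measurableSet_Ioc, smul_eq_mul, mul_one]; rfl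
        _ ≤ (volume (Set.Ioc (min x.1 x.2.1) (max x.1 x.2.1))).toReal := by
            apply ENNReal.toReal_mono
            · rw [Real.volume_Ioc]; exact ENNReal.ofReal_ne_top
            · exact Measure.le_iff'.1 Measure.restrict_le_self _
        _ = |x.1 - x.2.1| := by
            rw [Real.volume_Ioc, max_sub_min_eq_abs, ENNReal.toReal_ofReal (abs_nonneg _)]
            exact abs_sub_comm _ _
    calc |x.1 - x.2.2| * (∫ q, |(if x.2.1 < q then (1:ℝ) else 0)
          - (if x.1 < q then 1 else 0)| ∂rho01)
        ≤ 1 * |x.1 - x.2.1| := by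
          apply mul_le_mul hx hdel (integral_nonneg fun q => abs_nonneg _) zero_le_one
      _ = |x.1 - x.2.1| := one_mul _
  have hDint : Integrable (fun x : ℝ × ℝ × ℝ => |x.1 - x.2.1|) P :=
    integrable_of_bound ((measurable_fst.sub measurable_snd.fst).abs.aestronglyMeasurable) 1
      (by simpa using hDuv)
  have hInnerInt : Integrable (fun x : ℝ × ℝ × ℝ => ∫ q, |x.1 - x.2.2|
      * |(if x.2.1 < q then (1:ℝ) else 0) - (if x.1 < q then 1 else 0)| ∂rho01) P := by
    apply integrable_of_bound hInnerMeas.aestronglyMeasurable 1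
    filter_upwards [hDuy] with x hx
    apply abs_integral_le
    refine Filter.Eventually.of_forall fun q => ?_
    rw [abs_of_nonneg (mul_nonneg (abs_nonneg _) (abs_nonneg _))]
    exact mul_le_one₀ hx (abs_nonneg _) (ind_sub_abs_le _ _)
  have hBD : (∫ q, |Bf q| ∂rho01) ≤ D := by
    calc (∫ q, |Bf q| ∂rho01)
        ≤ ∫ q, (∫ x, |x.1 - x.2.2|
            * |(if x.2.1 < q then (1:ℝ) else 0) - (if x.1 < q then 1 else 0)| ∂P) ∂rho01 :=
          integral_mono intAbsB hRint hFq
      _ = ∫ x, (∫ q, |x.1 - x.2.2|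
            * |(if x.2.1 < q then (1:ℝ) else 0) - (if x.1 < q then 1 else 0)| ∂rho01) ∂P :=
          hswap
      _ ≤ ∫ x, |x.1 - x.2.1| ∂P := integral_mono_ae hInnerInt hDint hInner_le
      _ = D := by rw [hDdef]
  -- put everything together
  have hfinal : l1ATB mu ≤ D + 2 * ∫ q, |Bf q| ∂rho01 := by
    rw [l1ATB_eq]
    calc (∫ q, (|binNeg mu q| + |binPos mu q|) ∂rho01)
        ≤ ∫ q, (D + 2 * |Bf q|) ∂rho01 := by
          apply integral_mono (integrable_absbin hbmu)
            ((integrable_const D).add (intAbsB.const_mul 2)) hpt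
      _ = D + 2 * ∫ q, |Bf q| ∂rho01 := by
          rw [integral_add (integrable_const D) (intAbsB.const_mul 2), integral_const,
            integral_const_mul]
          simp
  linarith

end Part2

/-- ℓ1-ATB is a constant-factor approximation of the smooth calibration error and the
lower distance to calibration. -/
theorem l1atb_constant_factor (mu : Measure (ℝ × ℝ)) [IsProbabilityMeasure mu]
    (hsupp : ∀ᵐ x ∂mu, x.1 ∈ Set.Icc (0:ℝ) 1 ∧ (x.2 = 0 ∨ x.2 = 1)) :
    (2 / 3) * smCal mu ≤ l1ATB mu ∧ l1ATB mu ≤ 3 * distCal mu := by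
  constructor
  · have h1 := part1 hsupp
    linarith
  · have hne := coupling_nonempty hsupp
    have hle : l1ATB mu / 3 ≤ distCal mu := by
      unfold distCal
      apply le_csInf hne
      rintro c ⟨P, hP, hmap, hcal, hu, rfl⟩
      have := part2_bound hsupp hP hmap hcal hu
      linarith
    linarith

end
end

section
/- Let J be a calibrated probability distribution on [0,1] × {0,1}, let T be a positive integer, let (v_1,y_1),…,(v_T,y_T) be drawn i.i.d. from J, and let J_S be the uniform (empirical) distribution on these T points. Then Pr[ATB(J_S) ≤ 1/T] ≥ 3/4. -/
open MeasureTheory Finset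
open scoped ENNReal

noncomputable section

/-- The empirical (uniform) distribution of a sample of `T` points. -/
def empMeasure {T : ℕ} (s : Fin T → ℝ × ℝ) : Measure (ℝ × ℝ) :=
  (T : ℝ≥0∞)⁻¹ • ∑ t : Fin T, Measure.dirac (s t)

namespace ATBAux

variable {α : Type*} [MeasurableSpace α]

lemma integrable_dirac_of_singleton [MeasurableSingletonClass α] (f : α → ℝ) (a : α) :
    Integrable f (Measure.dirac a) := by
  have h : f =ᵐ[Measure.dirac a] fun _ => f a := by
    rw [Filter.EventuallyEq, ae_iff]
    have hsub : {x | ¬ f x = f a} ⊆ ({a}ᶜ : Set α) := by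
      intro x hx hxa
      exact hx (by simp only [Set.mem_singleton_iff] at hxa; rw [hxa])
    have h0 : Measure.dirac a ({a}ᶜ : Set α) = 0 := by
      simp [Measure.dirac_apply' _ (measurableSet_singleton a).compl]
    exact measure_mono_null hsub h0
  exact (integrable_const (f a)).congr h.symm

lemma pi_integral_prod {T : ℕ} (μ : Measure α) [IsProbabilityMeasure μ] (f : Fin T → α → ℝ) :
    ∫ x : Fin T → α, ∏ i, f i (x i) ∂(Measure.pi fun _ => μ) = ∏ i, ∫ a, f i a ∂μ := by
  letI : MeasureSpace α := ⟨μ⟩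
  have hv : (Measure.pi fun _ : Fin T => μ) = (volume : Measure (Fin T → α)) := by
    rw [volume_pi]
    rfl
  rw [hv]
  exact MeasureTheory.integral_fintype_prod_eq_prod f

lemma pi_integrable_prod {T : ℕ} (μ : Measure α) [IsProbabilityMeasure μ] {f : Fin T → α → ℝ}
    (hf : ∀ i, Integrable (f i) μ) :
    Integrable (fun x : Fin T → α => ∏ i, f i (x i)) (Measure.pi fun _ => μ) := by
  letI : MeasureSpace α := ⟨μ⟩
  have hv : (Measure.pi fun _ : Fin T => μ) = (volume : Measure (Fin T → α)) := by
    rw [volume_pi]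
    rfl
  rw [hv]
  exact Integrable.fintype_prod hf

lemma prod_pair_aux {M : Type*} [CommMonoid M] {T : ℕ} {t u : Fin T} (htu : t ≠ u)
    (f : Fin T → M) (hf : ∀ i, i ≠ t → i ≠ u → f i = 1) : ∏ i, f i = f t * f u := by
  classical
  rw [← Finset.mul_prod_erase univ f (mem_univ t)]
  have hu : u ∈ univ.erase t := Finset.mem_erase.mpr ⟨htu.symm, mem_univ u⟩
  rw [← Finset.mul_prod_erase _ f hu, Finset.prod_eq_one, mul_one]
  intro i hi
  rcases Finset.mem_erase.mp hi with ⟨hiu, hi'⟩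
  exact hf i (Finset.mem_erase.mp hi').1 hiu

lemma pi_integral_single {T : ℕ} (μ : Measure α) [IsProbabilityMeasure μ] (t : Fin T)
    (h : α → ℝ) :
    ∫ x : Fin T → α, h (x t) ∂(Measure.pi fun _ => μ) = ∫ a, h a ∂μ := by
  classical
  set f : Fin T → α → ℝ := fun i => if i = t then h else fun _ => 1 with hfdef
  have key : ∀ x : Fin T → α, ∏ i, f i (x i) = h (x t) := by
    intro x
    rw [Finset.prod_eq_single t]
    · simp [f]
    · intro i _ hit; simp [f, hit]
    · intro ht; exact absurd (mem_univ t) ht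
  calc ∫ x : Fin T → α, h (x t) ∂(Measure.pi fun _ => μ)
      = ∫ x : Fin T → α, ∏ i, f i (x i) ∂(Measure.pi fun _ => μ) :=
        integral_congr_ae (Filter.EventuallyEq.of_eq (funext fun x => (key x).symm))
    _ = ∏ i, ∫ a, f i a ∂μ := pi_integral_prod μ f
    _ = ∫ a, h a ∂μ := by
        rw [Finset.prod_eq_single t]
        · simp [f]
        · intro i _ hit; simp [f, hit]
        · intro ht; exact absurd (mem_univ t) ht

lemma pi_integrable_single {T : ℕ} (μ : Measure α) [IsProbabilityMeasure μ] (t : Fin T)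
    {h : α → ℝ} (hh : Integrable h μ) :
    Integrable (fun x : Fin T → α => h (x t)) (Measure.pi fun _ => μ) := by
  classical
  have hint : ∀ i : Fin T, Integrable ((fun i => if i = t then h else fun _ => (1:ℝ)) i) μ := by
    intro i; by_cases hi : i = t <;> simp [hi, hh]
  refine (pi_integrable_prod μ hint).congr (Filter.EventuallyEq.of_eq (funext fun x => ?_))
  rw [Finset.prod_eq_single t]
  · simp
  · intro i _ hit; simp [hit]
  · intro ht; exact absurd (mem_univ t) ht

lemma pi_integral_mul {T : ℕ} (μ : Measure α) [IsProbabilityMeasure μ] {t u : Fin T}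
    (htu : t ≠ u) (g h : α → ℝ) :
    ∫ x : Fin T → α, g (x t) * h (x u) ∂(Measure.pi fun _ => μ)
      = (∫ a, g a ∂μ) * ∫ a, h a ∂μ := by
  classical
  set f : Fin T → α → ℝ := fun i => if i = t then g else if i = u then h else fun _ => 1
    with hfdef
  have hft : f t = g := by simp [f]
  have hfu : f u = h := by simp [f, htu.symm]
  have hother : ∀ i, i ≠ t → i ≠ u → f i = fun _ => (1:ℝ) := by
    intro i hit hiu; simp [f, hit, hiu]
  have key : ∀ x : Fin T → α, ∏ i, f i (x i) = g (x t) * h (x u) := by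
    intro x
    have h2 := prod_pair_aux htu (fun i => f i (x i))
      (fun i hit hiu => by show f i (x i) = 1; rw [hother i hit hiu])
    simpa only [hft, hfu] using h2
  calc ∫ x : Fin T → α, g (x t) * h (x u) ∂(Measure.pi fun _ => μ)
      = ∫ x : Fin T → α, ∏ i, f i (x i) ∂(Measure.pi fun _ => μ) :=
        integral_congr_ae (Filter.EventuallyEq.of_eq (funext fun x => (key x).symm))
    _ = ∏ i, ∫ a, f i a ∂μ := pi_integral_prod μ f
    _ = (∫ a, g a ∂μ) * ∫ a, h a ∂μ := by
        have h2 := prod_pair_aux htu (fun i => ∫ a, f i a ∂μ)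
          (fun i hit hiu => by show (∫ a, f i a ∂μ) = 1; rw [hother i hit hiu]; simp)
        simpa only [hft, hfu] using h2

lemma pi_integrable_mul {T : ℕ} (μ : Measure α) [IsProbabilityMeasure μ] (t u : Fin T)
    {g : α → ℝ} (hg : Integrable g μ) (hg2 : Integrable (fun a => g a * g a) μ) :
    Integrable (fun x : Fin T → α => g (x t) * g (x u)) (Measure.pi fun _ => μ) := by
  classical
  rcases eq_or_ne t u with rfl | htu
  · exact pi_integrable_single μ t hg2
  · set f : Fin T → α → ℝ := fun i => if i = t then g else if i = u then g else fun _ => 1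
      with hfdef
    have hft : f t = g := by simp [f]
    have hfu : f u = g := by simp [f, htu.symm]
    have hother : ∀ i, i ≠ t → i ≠ u → f i = fun _ => (1:ℝ) := by
      intro i hit hiu; simp [f, hit, hiu]
    have hint : ∀ i : Fin T, Integrable (f i) μ := by
      intro i
      by_cases h1 : i = t
      · rw [h1, hft]; exact hg
      · by_cases h2 : i = u
        · rw [h2, hfu]; exact hg
        · rw [hother i h1 h2]; exact integrable_const 1
    refine (pi_integrable_prod μ hint).congr (Filter.EventuallyEq.of_eq (funext fun x => ?_))
    have h2 := prod_pair_aux htu (fun i => f i (x i))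
      (fun i hit hiu => by show f i (x i) = 1; rw [hother i hit hiu])
    simpa only [hft, hfu] using h2

lemma pi_integral_sq_sum {T : ℕ} (μ : Measure α) [IsProbabilityMeasure μ] {g : α → ℝ}
    (hg : Integrable g μ) (hg2 : Integrable (fun a => g a * g a) μ)
    (hg0 : ∫ a, g a ∂μ = 0) :
    ∫ x : Fin T → α, (∑ t, g (x t))^2 ∂(Measure.pi fun _ => μ)
      = T * ∫ a, g a * g a ∂μ := by
  classical
  have hint : ∀ t u : Fin T,
      Integrable (fun x : Fin T → α => g (x t) * g (x u)) (Measure.pi fun _ => μ) :=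
    fun t u => pi_integrable_mul μ t u hg hg2
  calc ∫ x : Fin T → α, (∑ t, g (x t))^2 ∂(Measure.pi fun _ => μ)
      = ∫ x : Fin T → α, ∑ t, ∑ u, g (x t) * g (x u) ∂(Measure.pi fun _ => μ) := by
        refine integral_congr_ae (Filter.EventuallyEq.of_eq (funext fun x => ?_))
        rw [sq, Finset.sum_mul_sum]
    _ = ∑ t, ∑ u, ∫ x : Fin T → α, g (x t) * g (x u) ∂(Measure.pi fun _ => μ) := by
        rw [integral_finset_sum _ (fun t _ => integrable_finset_sum _ (fun u _ => hint t u))]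
        exact Finset.sum_congr rfl fun t _ => integral_finset_sum _ (fun u _ => hint t u)
    _ = ∑ t : Fin T, ∑ u : Fin T, (if t = u then ∫ a, g a * g a ∂μ else 0) := by
        refine Finset.sum_congr rfl fun t _ => Finset.sum_congr rfl fun u _ => ?_
        rcases eq_or_ne t u with rfl | htu
        · rw [if_pos rfl]; exact pi_integral_single μ t (fun a => g a * g a)
        · rw [if_neg htu, pi_integral_mul μ htu g g, hg0, zero_mul]
    _ = ∑ _t : Fin T, ∫ a, g a * g a ∂μ := Finset.sum_congr rfl fun t _ => by simp
    _ = T * ∫ a, g a * g a ∂μ := by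
        simp [Finset.sum_const, Finset.card_univ, nsmul_eq_mul]


def fneg (q : ℝ) (a : ℝ × ℝ) : ℝ := (a.1 - a.2) * (if a.1 < q then 1 else 0)
def fpos (q : ℝ) (a : ℝ × ℝ) : ℝ := (a.1 - a.2) * (if q ≤ a.1 then 1 else 0)

lemma measurable_fneg (q : ℝ) : Measurable (fneg q) := by
  refine (measurable_fst.sub measurable_snd).mul ?_
  exact Measurable.ite (measurableSet_lt measurable_fst measurable_const)
    measurable_const measurable_const

lemma measurable_fpos (q : ℝ) : Measurable (fpos q) := by
  refine (measurable_fst.sub measurable_snd).mul ?_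
  exact Measurable.ite (measurableSet_le measurable_const measurable_fst)
    measurable_const measurable_const

lemma abs_sub_le_one {a : ℝ × ℝ} (ha : a.1 ∈ Set.Icc (0:ℝ) 1 ∧ (a.2 = 0 ∨ a.2 = 1)) :
    |a.1 - a.2| ≤ 1 := by
  obtain ⟨⟨h0, h1⟩, hy⟩ := ha
  rcases hy with hy | hy <;> rw [hy] <;> rw [abs_le] <;> constructor <;> linarith

lemma abs_fneg_le_one {q : ℝ} {a : ℝ × ℝ}
    (ha : a.1 ∈ Set.Icc (0:ℝ) 1 ∧ (a.2 = 0 ∨ a.2 = 1)) : |fneg q a| ≤ 1 := by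
  rw [fneg, abs_mul]
  have h2 : |if a.1 < q then (1:ℝ) else 0| ≤ 1 := by split <;> simp
  exact mul_le_one₀ (abs_sub_le_one ha) (abs_nonneg _) h2

lemma abs_fpos_le_one {q : ℝ} {a : ℝ × ℝ}
    (ha : a.1 ∈ Set.Icc (0:ℝ) 1 ∧ (a.2 = 0 ∨ a.2 = 1)) : |fpos q a| ≤ 1 := by
  rw [fpos, abs_mul]
  have h2 : |if q ≤ a.1 then (1:ℝ) else 0| ≤ 1 := by split <;> simp
  exact mul_le_one₀ (abs_sub_le_one ha) (abs_nonneg _) h2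

lemma fneg_sq_add_fpos_sq (q : ℝ) (a : ℝ × ℝ) :
    fneg q a * fneg q a + fpos q a * fpos q a = (a.1 - a.2)^2 := by
  rcases lt_or_ge a.1 q with h | h
  · rw [fneg, fpos, if_pos h, if_neg (not_le.mpr h)]; ring
  · rw [fneg, fpos, if_neg (not_lt.mpr h), if_pos h]; ring

section mu
variable {mu : Measure (ℝ × ℝ)} [IsProbabilityMeasure mu]
  (hsupp : ∀ᵐ x ∂mu, x.1 ∈ Set.Icc (0:ℝ) 1 ∧ (x.2 = 0 ∨ x.2 = 1))

include hsupp

lemma integrable_fst : Integrable (fun a : ℝ × ℝ => a.1) mu := by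
  refine Integrable.mono' (integrable_const 1) measurable_fst.aestronglyMeasurable ?_
  filter_upwards [hsupp] with a ha
  rw [Real.norm_eq_abs, abs_le]
  exact ⟨by linarith [ha.1.1], ha.1.2⟩

lemma integrable_snd : Integrable (fun a : ℝ × ℝ => a.2) mu := by
  refine Integrable.mono' (integrable_const 1) measurable_snd.aestronglyMeasurable ?_
  filter_upwards [hsupp] with a ha
  rw [Real.norm_eq_abs, abs_le]
  rcases ha.2 with h | h <;> rw [h] <;> norm_num

lemma integrable_fneg (q : ℝ) : Integrable (fneg q) mu := by
  refine Integrable.mono' (integrable_const 1) (measurable_fneg q).aestronglyMeasurable ?_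
  filter_upwards [hsupp] with a ha
  exact abs_fneg_le_one ha

lemma integrable_fpos (q : ℝ) : Integrable (fpos q) mu := by
  refine Integrable.mono' (integrable_const 1) (measurable_fpos q).aestronglyMeasurable ?_
  filter_upwards [hsupp] with a ha
  exact abs_fpos_le_one ha

lemma integrable_fneg_sq (q : ℝ) : Integrable (fun a => fneg q a * fneg q a) mu := by
  refine Integrable.mono' (integrable_const 1)
    ((measurable_fneg q).mul (measurable_fneg q)).aestronglyMeasurable ?_
  filter_upwards [hsupp] with a ha
  have h := abs_fneg_le_one (q := q) ha
  rw [Real.norm_eq_abs, abs_mul]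
  exact mul_le_one₀ h (abs_nonneg _) h

lemma integrable_fpos_sq (q : ℝ) : Integrable (fun a => fpos q a * fpos q a) mu := by
  refine Integrable.mono' (integrable_const 1)
    ((measurable_fpos q).mul (measurable_fpos q)).aestronglyMeasurable ?_
  filter_upwards [hsupp] with a ha
  have h := abs_fpos_le_one (q := q) ha
  rw [Real.norm_eq_abs, abs_mul]
  exact mul_le_one₀ h (abs_nonneg _) h

lemma integrable_sq_diff : Integrable (fun a : ℝ × ℝ => (a.1 - a.2)^2) mu := by
  refine Integrable.mono' (integrable_const 1)
    (((measurable_fst.sub measurable_snd).pow measurable_const)).aestronglyMeasurable ?_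
  filter_upwards [hsupp] with a ha
  have h := abs_sub_le_one ha
  rw [Real.norm_eq_abs, abs_pow]
  calc |a.1 - a.2| ^ 2 ≤ 1 ^ 2 := pow_le_pow_left₀ (abs_nonneg _) h 2
    _ = 1 := one_pow 2

lemma integral_fneg_zero (hcal : Calibrated mu) (q : ℝ) : ∫ a, fneg q a ∂mu = 0 := by
  classical
  have hset : MeasurableSet (Prod.fst ⁻¹' Set.Iio q : Set (ℝ × ℝ)) :=
    measurable_fst measurableSet_Iio
  have hrw : ∀ a : ℝ × ℝ, fneg q a
      = Set.indicator (Prod.fst ⁻¹' Set.Iio q) (fun a : ℝ × ℝ => a.1 - a.2) a := by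
    intro a
    rw [Set.indicator_apply]
    by_cases h : a.1 < q
    · rw [if_pos (by simpa [Set.mem_preimage, Set.mem_Iio] using h), fneg, if_pos h, mul_one]
    · rw [if_neg (by simpa [Set.mem_preimage, Set.mem_Iio] using h), fneg, if_neg h, mul_zero]
  rw [integral_congr_ae (Filter.EventuallyEq.of_eq (funext hrw)), integral_indicator hset,
    integral_sub ((integrable_fst hsupp).restrict) ((integrable_snd hsupp).restrict),
    hcal (Set.Iio q) measurableSet_Iio, sub_self]

lemma integral_fpos_zero (hcal : Calibrated mu) (q : ℝ) : ∫ a, fpos q a ∂mu = 0 := by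
  classical
  have hset : MeasurableSet (Prod.fst ⁻¹' Set.Ici q : Set (ℝ × ℝ)) :=
    measurable_fst measurableSet_Ici
  have hrw : ∀ a : ℝ × ℝ, fpos q a
      = Set.indicator (Prod.fst ⁻¹' Set.Ici q) (fun a : ℝ × ℝ => a.1 - a.2) a := by
    intro a
    rw [Set.indicator_apply]
    by_cases h : q ≤ a.1
    · rw [if_pos (by simpa [Set.mem_preimage, Set.mem_Ici] using h), fpos, if_pos h, mul_one]
    · rw [if_neg (by simpa [Set.mem_preimage, Set.mem_Ici] using h), fpos, if_neg h, mul_zero]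
  rw [integral_congr_ae (Filter.EventuallyEq.of_eq (funext hrw)), integral_indicator hset,
    integral_sub ((integrable_fst hsupp).restrict) ((integrable_snd hsupp).restrict),
    hcal (Set.Ici q) measurableSet_Ici, sub_self]

end mu

lemma integral_ind_lt {v : ℝ} (h0 : 0 ≤ v) (h1 : v ≤ 1) :
    ∫ q in Set.Ioc (0:ℝ) 1, (if v < q then (1:ℝ) else 0) = 1 - v := by
  have hrw : ∀ q : ℝ, (if v < q then (1:ℝ) else 0)
      = Set.indicator (Set.Ioi v) (fun _ => (1:ℝ)) q := by
    intro q
    rw [Set.indicator_apply]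
    by_cases h : v < q
    · rw [if_pos h, if_pos (Set.mem_Ioi.mpr h)]
    · rw [if_neg h, if_neg (by simpa [Set.mem_Ioi] using h)]
  rw [integral_congr_ae (Filter.EventuallyEq.of_eq (funext hrw)),
    setIntegral_indicator measurableSet_Ioi]
  have hs : Set.Ioc (0:ℝ) 1 ∩ Set.Ioi v = Set.Ioc v 1 := by
    ext x
    simp only [Set.mem_inter_iff, Set.mem_Ioc, Set.mem_Ioi]
    constructor
    · rintro ⟨⟨hx0, hx1⟩, hxv⟩; exact ⟨hxv, hx1⟩
    · rintro ⟨hxv, hx1⟩; exact ⟨⟨lt_of_le_of_lt h0 hxv, hx1⟩, hxv⟩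
  rw [hs, setIntegral_const, Real.volume_real_Ioc_of_le (by linarith), smul_eq_mul,
    mul_one]

lemma integral_ind_le {v : ℝ} (h0 : 0 ≤ v) (h1 : v ≤ 1) :
    ∫ q in Set.Ioc (0:ℝ) 1, (if q ≤ v then (1:ℝ) else 0) = v := by
  have hrw : ∀ q : ℝ, (if q ≤ v then (1:ℝ) else 0)
      = Set.indicator (Set.Iic v) (fun _ => (1:ℝ)) q := by
    intro q
    rw [Set.indicator_apply]
    by_cases h : q ≤ v
    · rw [if_pos h, if_pos (Set.mem_Iic.mpr h)]
    · rw [if_neg h, if_neg (by simpa [Set.mem_Iic] using h)]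
  rw [integral_congr_ae (Filter.EventuallyEq.of_eq (funext hrw)),
    setIntegral_indicator measurableSet_Iic]
  have hs : Set.Ioc (0:ℝ) 1 ∩ Set.Iic v = Set.Ioc 0 v := by
    ext x
    simp only [Set.mem_inter_iff, Set.mem_Ioc, Set.mem_Iic]
    constructor
    · rintro ⟨⟨hx0, hx1⟩, hxv⟩; exact ⟨hx0, hxv⟩
    · rintro ⟨hx0, hxv⟩; exact ⟨⟨hx0, le_trans hxv h1⟩, hxv⟩
  rw [hs, setIntegral_const, Real.volume_real_Ioc_of_le (by linarith), smul_eq_mul,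
    mul_one, sub_zero]

section mu2
variable {mu : Measure (ℝ × ℝ)} [IsProbabilityMeasure mu]
  (hsupp : ∀ᵐ x ∂mu, x.1 ∈ Set.Icc (0:ℝ) 1 ∧ (x.2 = 0 ∨ x.2 = 1))

include hsupp

lemma integral_cross_zero (hcal : Calibrated mu) :
    ∫ a, (a.2 - a.1) * (1 - 2 * a.1) ∂mu = 0 := by
  set ν := (volume : Measure ℝ).restrict (Set.Ioc (0:ℝ) 1) with hν
  haveI : IsProbabilityMeasure ν := ⟨by
    rw [hν, Measure.restrict_apply_univ]; simp [Real.volume_Ioc]⟩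
  set W : ℝ × ℝ → ℝ → ℝ := fun a q =>
    (a.2 - a.1) * ((if a.1 < q then (1:ℝ) else 0) - (if q ≤ a.1 then (1:ℝ) else 0)) with hWdef
  have hWmeas : Measurable (fun z : (ℝ × ℝ) × ℝ => W z.1 z.2) := by
    refine ((measurable_snd.comp measurable_fst).sub (measurable_fst.comp measurable_fst)).mul ?_
    refine Measurable.sub ?_ ?_
    · exact Measurable.ite (measurableSet_lt (measurable_fst.comp measurable_fst) measurable_snd)
        measurable_const measurable_const
    · exact Measurable.ite (measurableSet_le measurable_snd (measurable_fst.comp measurable_fst))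
        measurable_const measurable_const
  have hWbound : ∀ a : ℝ × ℝ, a.1 ∈ Set.Icc (0:ℝ) 1 ∧ (a.2 = 0 ∨ a.2 = 1) →
      ∀ q : ℝ, |W a q| ≤ 1 := by
    intro a ha q
    obtain ⟨⟨h0, h1⟩, hy⟩ := ha
    have hA : |a.2 - a.1| ≤ 1 := by
      rcases hy with h | h <;> rw [h, abs_le] <;> constructor <;> linarith
    rcases lt_or_ge a.1 q with h | h
    · rw [hWdef]
      simp only [if_pos h, if_neg (not_le.mpr h)]
      rw [sub_zero, mul_one]
      exact hA
    · rw [hWdef]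
      simp only [if_neg (not_lt.mpr h), if_pos h]
      rw [zero_sub, mul_neg, abs_neg, mul_one]
      exact hA
  have hint : Integrable (Function.uncurry W) (mu.prod ν) := by
    refine Integrable.mono' (integrable_const 1) hWmeas.aestronglyMeasurable ?_
    filter_upwards [Measure.quasiMeasurePreserving_fst.ae hsupp] with z hz
    exact hWbound z.1 hz z.2
  have key : ∀ᵐ a ∂mu, (a.2 - a.1) * (1 - 2 * a.1) = ∫ q, W a q ∂ν := by
    filter_upwards [hsupp] with a ha
    have hIa : Integrable (fun q => (if a.1 < q then (1:ℝ) else 0)) ν := by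
      refine Integrable.mono' (integrable_const 1) ?_ (ae_of_all _ fun q => ?_)
      · exact (Measurable.ite measurableSet_Ioi measurable_const
          measurable_const).aestronglyMeasurable
      · rw [Real.norm_eq_abs]; split <;> simp
    have hIb : Integrable (fun q => (if q ≤ a.1 then (1:ℝ) else 0)) ν := by
      refine Integrable.mono' (integrable_const 1) ?_ (ae_of_all _ fun q => ?_)
      · exact (Measurable.ite measurableSet_Iic measurable_const
          measurable_const).aestronglyMeasurable
      · rw [Real.norm_eq_abs]; split <;> simp
    have hsplit : ∫ q, W a q ∂ν = (a.2 - a.1) *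
        ((∫ q, (if a.1 < q then (1:ℝ) else 0) ∂ν) - ∫ q, (if q ≤ a.1 then (1:ℝ) else 0) ∂ν) := by
      rw [← integral_sub hIa hIb, ← integral_const_mul]
    have hlt := integral_ind_lt ha.1.1 ha.1.2
    have hle := integral_ind_le ha.1.1 ha.1.2
    rw [hsplit, hν]
    rw [show (∫ q, (if a.1 < q then (1:ℝ) else 0)
        ∂(volume : Measure ℝ).restrict (Set.Ioc (0:ℝ) 1)) = 1 - a.1 from hlt]
    rw [show (∫ q, (if q ≤ a.1 then (1:ℝ) else 0)
        ∂(volume : Measure ℝ).restrict (Set.Ioc (0:ℝ) 1)) = a.1 from hle]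
    ring
  rw [integral_congr_ae key, integral_integral_swap hint]
  have hinner : ∀ q : ℝ, ∫ a, W a q ∂mu = 0 := by
    intro q
    have e1f : (fun a : ℝ × ℝ => (a.2 - a.1) * (if a.1 < q then (1:ℝ) else 0))
        = fun a => -fneg q a := funext fun a => by rw [fneg]; ring
    have e2f : (fun a : ℝ × ℝ => (a.2 - a.1) * (if q ≤ a.1 then (1:ℝ) else 0))
        = fun a => -fpos q a := funext fun a => by rw [fpos]; ring
    have h1 : Integrable (fun a : ℝ × ℝ => (a.2 - a.1) * (if a.1 < q then (1:ℝ) else 0)) mu := by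
      rw [e1f]; exact (integrable_fneg hsupp q).neg
    have h2 : Integrable (fun a : ℝ × ℝ => (a.2 - a.1) * (if q ≤ a.1 then (1:ℝ) else 0)) mu := by
      rw [e2f]; exact (integrable_fpos hsupp q).neg
    have hWq : ∫ a, W a q ∂mu
        = (∫ a, (a.2 - a.1) * (if a.1 < q then (1:ℝ) else 0) ∂mu)
          - ∫ a, (a.2 - a.1) * (if q ≤ a.1 then (1:ℝ) else 0) ∂mu := by
      rw [← integral_sub h1 h2]
      refine integral_congr_ae (ae_of_all _ fun a => ?_)
      rw [hWdef]; ring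
    rw [hWq, e1f, e2f, integral_neg, integral_neg,
      integral_fneg_zero hsupp hcal q, integral_fpos_zero hsupp hcal q, neg_zero, sub_self]
  calc ∫ q, ∫ a, W a q ∂mu ∂ν = ∫ q, (0:ℝ) ∂ν :=
        integral_congr_ae (ae_of_all _ hinner)
    _ = 0 := integral_zero _ _

lemma integral_sq_diff_le (hcal : Calibrated mu) :
    ∫ a, (a.1 - a.2)^2 ∂mu ≤ 1/4 := by
  have hid : ∀ᵐ a ∂mu, (a.1 - a.2)^2 = a.1 * (1 - a.1) + (a.2 - a.1) * (1 - 2 * a.1) := by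
    filter_upwards [hsupp] with a ha
    rcases ha.2 with h | h <;> rw [h] <;> ring
  have hint1 : Integrable (fun a : ℝ × ℝ => a.1 * (1 - a.1)) mu := by
    refine Integrable.mono' (integrable_const 1)
      (measurable_fst.mul (measurable_const.sub measurable_fst)).aestronglyMeasurable ?_
    filter_upwards [hsupp] with a ha
    obtain ⟨⟨h0, h1⟩, _⟩ := ha
    rw [Real.norm_eq_abs, abs_mul]
    exact mul_le_one₀ (abs_le.mpr ⟨by linarith, h1⟩) (abs_nonneg _)
      (abs_le.mpr ⟨by linarith, by linarith⟩)
  have hint2 : Integrable (fun a : ℝ × ℝ => (a.2 - a.1) * (1 - 2 * a.1)) mu := by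
    refine Integrable.mono' (integrable_const 1)
      ((measurable_snd.sub measurable_fst).mul
        (measurable_const.sub (measurable_const.mul measurable_fst))).aestronglyMeasurable ?_
    filter_upwards [hsupp] with a ha
    obtain ⟨⟨h0, h1⟩, hy⟩ := ha
    rw [Real.norm_eq_abs, abs_mul]
    have hA : |a.2 - a.1| ≤ 1 := by
      rcases hy with h | h <;> rw [h, abs_le] <;> constructor <;> linarith
    exact mul_le_one₀ hA (abs_nonneg _) (abs_le.mpr ⟨by linarith, by linarith⟩)
  rw [integral_congr_ae hid, integral_add hint1 hint2, integral_cross_zero hsupp hcal, add_zero]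
  have hb : ∀ᵐ a ∂mu, a.1 * (1 - a.1) ≤ 1/4 := by
    filter_upwards [hsupp] with a ha
    nlinarith [sq_nonneg (a.1 - 1/2)]
  calc ∫ a, a.1 * (1 - a.1) ∂mu ≤ ∫ _a, (1/4 : ℝ) ∂mu :=
        integral_mono_ae hint1 (integrable_const _) hb
    _ = 1/4 := by simp

end mu2

section emp

lemma binNeg_empMeasure {T : ℕ} (s : Fin T → ℝ × ℝ) (q : ℝ) :
    binNeg (empMeasure s) q = (T:ℝ)⁻¹ * ∑ t, fneg q (s t) := by
  rw [binNeg, empMeasure, integral_smul_measure,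
    integral_finset_sum_measure (fun t _ => integrable_dirac_of_singleton _ _)]
  simp only [integral_dirac]
  rw [smul_eq_mul, ENNReal.toReal_inv, ENNReal.toReal_natCast]
  rfl

lemma binPos_empMeasure {T : ℕ} (s : Fin T → ℝ × ℝ) (q : ℝ) :
    binPos (empMeasure s) q = (T:ℝ)⁻¹ * ∑ t, fpos q (s t) := by
  rw [binPos, empMeasure, integral_smul_measure,
    integral_finset_sum_measure (fun t _ => integrable_dirac_of_singleton _ _)]
  simp only [integral_dirac]
  rw [smul_eq_mul, ENNReal.toReal_inv, ENNReal.toReal_natCast]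
  rfl

variable {mu : Measure (ℝ × ℝ)} [IsProbabilityMeasure mu]
  (hsupp : ∀ᵐ x ∂mu, x.1 ∈ Set.Icc (0:ℝ) 1 ∧ (x.2 = 0 ∨ x.2 = 1))

include hsupp

lemma inner_expectation (hcal : Calibrated mu) {T : ℕ} (q : ℝ) :
    ∫ x : Fin T → ℝ × ℝ,
        (((T:ℝ)⁻¹ * ∑ t, fneg q (x t))^2 + ((T:ℝ)⁻¹ * ∑ t, fpos q (x t))^2)
        ∂(Measure.pi fun _ : Fin T => mu)
      = (T:ℝ)⁻¹ * (T:ℝ)⁻¹ * (T:ℝ) * ∫ a, (a.1 - a.2)^2 ∂mu := by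
  have hIneg := integrable_fneg hsupp q
  have hIpos := integrable_fpos hsupp q
  have hIneg2 := integrable_fneg_sq hsupp q
  have hIpos2 := integrable_fpos_sq hsupp q
  have hsqneg := pi_integral_sq_sum (T := T) mu hIneg hIneg2 (integral_fneg_zero hsupp hcal q)
  have hsqpos := pi_integral_sq_sum (T := T) mu hIpos hIpos2 (integral_fpos_zero hsupp hcal q)
  have basen : Integrable (fun x : Fin T → ℝ × ℝ =>
      ∑ t : Fin T, ∑ u : Fin T, fneg q (x t) * fneg q (x u))
      (Measure.pi fun _ : Fin T => mu) :=
    integrable_finset_sum _ fun t _ => integrable_finset_sum _ fun u _ =>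
      pi_integrable_mul mu t u hIneg hIneg2
  have basep : Integrable (fun x : Fin T → ℝ × ℝ =>
      ∑ t : Fin T, ∑ u : Fin T, fpos q (x t) * fpos q (x u))
      (Measure.pi fun _ : Fin T => mu) :=
    integrable_finset_sum _ fun t _ => integrable_finset_sum _ fun u _ =>
      pi_integrable_mul mu t u hIpos hIpos2
  have hIsumn : Integrable (fun x : Fin T → ℝ × ℝ => (∑ t, fneg q (x t))^2)
      (Measure.pi fun _ : Fin T => mu) := by
    refine basen.congr (ae_of_all _ fun x => ?_)
    dsimp only
    rw [sq, Finset.sum_mul_sum]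
  have hIsump : Integrable (fun x : Fin T → ℝ × ℝ => (∑ t, fpos q (x t))^2)
      (Measure.pi fun _ : Fin T => mu) := by
    refine basep.congr (ae_of_all _ fun x => ?_)
    dsimp only
    rw [sq, Finset.sum_mul_sum]
  calc ∫ x : Fin T → ℝ × ℝ,
        (((T:ℝ)⁻¹ * ∑ t, fneg q (x t))^2 + ((T:ℝ)⁻¹ * ∑ t, fpos q (x t))^2)
        ∂(Measure.pi fun _ : Fin T => mu)
      = ∫ x : Fin T → ℝ × ℝ,
        (((T:ℝ)⁻¹)^2 * (∑ t, fneg q (x t))^2 + ((T:ℝ)⁻¹)^2 * (∑ t, fpos q (x t))^2)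
        ∂(Measure.pi fun _ : Fin T => mu) := by
        refine integral_congr_ae (ae_of_all _ fun x => ?_)
        dsimp only
        rw [mul_pow, mul_pow]
    _ = ((T:ℝ)⁻¹)^2 * ∫ x : Fin T → ℝ × ℝ, (∑ t, fneg q (x t))^2
          ∂(Measure.pi fun _ : Fin T => mu)
        + ((T:ℝ)⁻¹)^2 * ∫ x : Fin T → ℝ × ℝ, (∑ t, fpos q (x t))^2
          ∂(Measure.pi fun _ : Fin T => mu) := by
        rw [integral_add (hIsumn.const_mul _) (hIsump.const_mul _),
          integral_const_mul, integral_const_mul]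
    _ = ((T:ℝ)⁻¹)^2 * ((T:ℕ) * ∫ a, fneg q a * fneg q a ∂mu)
        + ((T:ℝ)⁻¹)^2 * ((T:ℕ) * ∫ a, fpos q a * fpos q a ∂mu) := by
        rw [hsqneg, hsqpos]
    _ = (T:ℝ)⁻¹ * (T:ℝ)⁻¹ * (T:ℝ) * (∫ a, fneg q a * fneg q a ∂mu
          + ∫ a, fpos q a * fpos q a ∂mu) := by
        push_cast
        ring
    _ = (T:ℝ)⁻¹ * (T:ℝ)⁻¹ * (T:ℝ) * ∫ a, (a.1 - a.2)^2 ∂mu := by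
        rw [← integral_add hIneg2 hIpos2]
        congr 1
        exact integral_congr_ae (ae_of_all _ fun a => fneg_sq_add_fpos_sq q a)

end emp

end ATBAux

open ATBAux in
/-- On a sample of `T` i.i.d. points from a calibrated distribution, the empirical ATB is at
most `1/T` with probability at least `3/4`. -/
theorem atb_calibrated_acceptance (mu : Measure (ℝ × ℝ)) [IsProbabilityMeasure mu]
    (hsupp : ∀ᵐ x ∂mu, x.1 ∈ Set.Icc (0:ℝ) 1 ∧ (x.2 = 0 ∨ x.2 = 1))
    (hcal : Calibrated mu) (T : ℕ) (hT : 0 < T) :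
    Measure.pi (fun _ : Fin T => mu) {s | ATB (empMeasure s) ≤ 1 / (T:ℝ)} ≥ 3 / 4 := by
  classical
  have hT' : (0:ℝ) < (T:ℝ) := by exact_mod_cast hT
  set P : Measure (Fin T → ℝ × ℝ) := Measure.pi (fun _ : Fin T => mu) with hP
  set ν : Measure ℝ := (volume : Measure ℝ).restrict (Set.Ioc (0:ℝ) 1) with hν
  haveI : IsProbabilityMeasure ν := ⟨by
    rw [hν, Measure.restrict_apply_univ]; simp [Real.volume_Ioc]⟩
  haveI : IsProbabilityMeasure P := by rw [hP]; infer_instance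
  set Φ : (Fin T → ℝ × ℝ) → ℝ → ℝ := fun x q =>
    ((T:ℝ)⁻¹ * ∑ t, fneg q (x t))^2 + ((T:ℝ)⁻¹ * ∑ t, fpos q (x t))^2 with hΦ
  have hATB : ∀ x : Fin T → ℝ × ℝ, ATB (empMeasure x) = ∫ q, Φ x q ∂ν := by
    intro x
    rw [ATB, intervalIntegral.integral_of_le zero_le_one]
    refine integral_congr_ae (ae_of_all _ fun q => ?_)
    show binNeg (empMeasure x) q ^ 2 + binPos (empMeasure x) q ^ 2
      = ((T:ℝ)⁻¹ * ∑ t, fneg q (x t)) ^ 2 + ((T:ℝ)⁻¹ * ∑ t, fpos q (x t)) ^ 2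
    rw [binNeg_empMeasure, binPos_empMeasure]
  have hsuppP : ∀ᵐ x ∂P, ∀ t, (x t).1 ∈ Set.Icc (0:ℝ) 1 ∧ ((x t).2 = 0 ∨ (x t).2 = 1) := by
    rw [ae_all_iff]
    intro t
    exact (Measure.tendsto_eval_ae_ae (μ := fun _ : Fin T => mu) (i := t)).eventually hsupp
  have hΦbound : ∀ x : Fin T → ℝ × ℝ,
      (∀ t, (x t).1 ∈ Set.Icc (0:ℝ) 1 ∧ ((x t).2 = 0 ∨ (x t).2 = 1)) →
      ∀ q : ℝ, |Φ x q| ≤ 2 := by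
    intro x hx q
    have habs : ∀ (g : ℝ → ℝ × ℝ → ℝ), (∀ a q', a.1 ∈ Set.Icc (0:ℝ) 1 ∧ (a.2 = 0 ∨ a.2 = 1) →
        |g q' a| ≤ 1) → |(T:ℝ)⁻¹ * ∑ t, g q (x t)| ≤ 1 := by
      intro g hg
      rw [abs_mul, abs_inv, Nat.abs_cast]
      have hsum : |∑ t, g q (x t)| ≤ (T:ℝ) := by
        calc |∑ t, g q (x t)| ≤ ∑ t, |g q (x t)| := Finset.abs_sum_le_sum_abs _ _
          _ ≤ ∑ _t : Fin T, (1:ℝ) := Finset.sum_le_sum fun t _ => hg (x t) q (hx t)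
          _ = (T:ℝ) := by simp
      calc (T:ℝ)⁻¹ * |∑ t, g q (x t)| ≤ (T:ℝ)⁻¹ * (T:ℝ) :=
            mul_le_mul_of_nonneg_left hsum (by positivity)
        _ = 1 := inv_mul_cancel₀ (ne_of_gt hT')
    have hn := habs fneg (fun a q' ha => abs_fneg_le_one ha)
    have hp := habs fpos (fun a q' ha => abs_fpos_le_one ha)
    have h1 : ((T:ℝ)⁻¹ * ∑ t, fneg q (x t))^2 ≤ 1 := by
      rw [← sq_abs]
      nlinarith [abs_nonneg ((T:ℝ)⁻¹ * ∑ t, fneg q (x t))]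
    have h2 : ((T:ℝ)⁻¹ * ∑ t, fpos q (x t))^2 ≤ 1 := by
      rw [← sq_abs]
      nlinarith [abs_nonneg ((T:ℝ)⁻¹ * ∑ t, fpos q (x t))]
    have hnn : 0 ≤ Φ x q := by rw [hΦ]; positivity
    rw [abs_of_nonneg hnn]
    rw [hΦ]
    dsimp only
    linarith
  have hΦmeas : Measurable (Function.uncurry Φ) := by
    have hn : ∀ t : Fin T, Measurable (fun z : (Fin T → ℝ × ℝ) × ℝ => fneg z.2 (z.1 t)) := by
      intro t
      have hc : Measurable (fun z : (Fin T → ℝ × ℝ) × ℝ => (z.1 t, z.2)) :=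
        ((measurable_pi_apply t).comp measurable_fst).prodMk measurable_snd
      have : Measurable (fun p : (ℝ × ℝ) × ℝ => fneg p.2 p.1) := by
        refine ((measurable_fst.fst.sub measurable_fst.snd)).mul ?_
        exact Measurable.ite (measurableSet_lt measurable_fst.fst measurable_snd)
          measurable_const measurable_const
      exact this.comp hc
    have hp : ∀ t : Fin T, Measurable (fun z : (Fin T → ℝ × ℝ) × ℝ => fpos z.2 (z.1 t)) := by
      intro t
      have hc : Measurable (fun z : (Fin T → ℝ × ℝ) × ℝ => (z.1 t, z.2)) :=
        ((measurable_pi_apply t).comp measurable_fst).prodMk measurable_snd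
      have : Measurable (fun p : (ℝ × ℝ) × ℝ => fpos p.2 p.1) := by
        refine ((measurable_fst.fst.sub measurable_fst.snd)).mul ?_
        exact Measurable.ite (measurableSet_le measurable_snd measurable_fst.fst)
          measurable_const measurable_const
      exact this.comp hc
    have h1 : Measurable (fun z : (Fin T → ℝ × ℝ) × ℝ =>
        ((T:ℝ)⁻¹ * ∑ t, fneg z.2 (z.1 t))^2) :=
      ((measurable_const.mul (Finset.measurable_sum _ fun t _ => hn t)).pow measurable_const)
    have h2 : Measurable (fun z : (Fin T → ℝ × ℝ) × ℝ =>
        ((T:ℝ)⁻¹ * ∑ t, fpos z.2 (z.1 t))^2) :=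
      ((measurable_const.mul (Finset.measurable_sum _ fun t _ => hp t)).pow measurable_const)
    exact h1.add h2
  have hintΦ : Integrable (Function.uncurry Φ) (P.prod ν) := by
    refine Integrable.mono' (integrable_const 2) hΦmeas.aestronglyMeasurable ?_
    filter_upwards [Measure.quasiMeasurePreserving_fst.ae hsuppP] with z hz
    exact hΦbound z.1 hz z.2
  have hinner : ∀ q : ℝ, ∫ x, Φ x q ∂P
      = (T:ℝ)⁻¹ * (T:ℝ)⁻¹ * (T:ℝ) * ∫ a, (a.1 - a.2)^2 ∂mu := fun q =>
    inner_expectation hsupp hcal q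
  have hf_nonneg : ∀ x : Fin T → ℝ × ℝ, 0 ≤ ATB (empMeasure x) := by
    intro x
    rw [hATB x]
    refine integral_nonneg fun q => ?_
    rw [hΦ]
    positivity
  have hf_int : Integrable (fun x => ATB (empMeasure x)) P :=
    hintΦ.integral_prod_left.congr (ae_of_all _ fun x => (hATB x).symm)
  have hEbound : ∫ x, ATB (empMeasure x) ∂P ≤ (T:ℝ)⁻¹ * (1/4) := by
    calc ∫ x, ATB (empMeasure x) ∂P = ∫ x, ∫ q, Φ x q ∂ν ∂P :=
          integral_congr_ae (ae_of_all _ hATB)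
      _ = ∫ q, ∫ x, Φ x q ∂P ∂ν := integral_integral_swap hintΦ
      _ = ∫ _q, ((T:ℝ)⁻¹ * (T:ℝ)⁻¹ * (T:ℝ) * ∫ a, (a.1 - a.2)^2 ∂mu) ∂ν :=
          integral_congr_ae (ae_of_all _ hinner)
      _ = (T:ℝ)⁻¹ * (T:ℝ)⁻¹ * (T:ℝ) * ∫ a, (a.1 - a.2)^2 ∂mu := by simp
      _ = (T:ℝ)⁻¹ * ∫ a, (a.1 - a.2)^2 ∂mu := by
          rw [mul_assoc ((T:ℝ)⁻¹), inv_mul_cancel₀ (ne_of_gt hT'), mul_one]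
      _ ≤ (T:ℝ)⁻¹ * (1/4) :=
          mul_le_mul_of_nonneg_left (integral_sq_diff_le hsupp hcal) (by positivity)
  have hmarkov := mul_meas_ge_le_integral_of_nonneg (ae_of_all _ hf_nonneg) hf_int (1/(T:ℝ))
  have hPB : (P {x | 1/(T:ℝ) ≤ ATB (empMeasure x)}).toReal ≤ 1/4 := by
    have h2 := le_trans hmarkov hEbound
    rw [measureReal_def] at h2
    nlinarith [h2, one_div (T:ℝ), inv_pos.mpr hT',
      ENNReal.toReal_nonneg (a := P {x | 1/(T:ℝ) ≤ ATB (empMeasure x)})]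
  set A := {x : Fin T → ℝ × ℝ | ATB (empMeasure x) ≤ 1/(T:ℝ)} with hA
  have hPAc : P Aᶜ ≤ 1/4 := by
    have hsub : Aᶜ ⊆ {x | 1/(T:ℝ) ≤ ATB (empMeasure x)} := by
      intro x hx
      simp only [hA, Set.mem_compl_iff, Set.mem_setOf_eq, not_le] at hx
      exact le_of_lt hx
    calc P Aᶜ ≤ P {x | 1/(T:ℝ) ≤ ATB (empMeasure x)} := measure_mono hsub
      _ ≤ ENNReal.ofReal (1/4) := by
          rw [← ENNReal.ofReal_toReal (measure_ne_top P _)]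
          exact ENNReal.ofReal_le_ofReal hPB
      _ = 1/4 := by
          rw [ENNReal.ofReal_div_of_pos (by norm_num)]
          norm_num
  have huniv : (1:ℝ≥0∞) ≤ P A + 1/4 := by
    calc (1:ℝ≥0∞) = P Set.univ := measure_univ.symm
      _ = P (A ∪ Aᶜ) := by rw [Set.union_compl_self]
      _ ≤ P A + P Aᶜ := measure_union_le _ _
      _ ≤ P A + 1/4 := add_le_add le_rfl hPAc
  have hq : (3/4 : ℝ≥0∞) + 1/4 = 1 := by
    rw [ENNReal.div_add_div_same, show (3:ℝ≥0∞) + 1 = 4 by norm_num]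
    exact ENNReal.div_self (by norm_num) (by norm_num)
  have hfinal : (3/4 : ℝ≥0∞) + 1/4 ≤ P A + 1/4 := by rw [hq]; exact huniv
  exact (ENNReal.add_le_add_iff_right (by norm_num : (1/4:ℝ≥0∞) ≠ ⊤)).mp hfinal

end
end

section
/- For every positive integer T, every r = (r_1,…,r_T) ∈ [0,1]^T, and every y ∈ {0,1}^T, the smooth calibration error of the constant prediction sequence r̄ = (r̄,…,r̄) ∈ [0,1]^T with r̄ := (1/T) Σ_{t=1}^T r_t is no larger than that of r: smCal(r̄, y) ≤ smCal(r, y). -/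
open MeasureTheory Finset

noncomputable section

/-- Pooling all predictions into their average never increases the smooth calibration
error, regardless of the realized states. -/
theorem smCal_avg_le (T : ℕ) (hT : 0 < T) (r y : Fin T → ℝ)
    (hr : ∀ t, r t ∈ Set.Icc (0:ℝ) 1) (hy : ∀ t, y t = 0 ∨ y t = 1) :
    smCalSeq (fun _ => (1 / (T:ℝ)) * ∑ t, r t) y ≤ smCalSeq r y := by
  set rbar : ℝ := (1 / (T:ℝ)) * ∑ t, r t with hrbar
  have hTpos : (0:ℝ) < T := by exact_mod_cast hT
  apply csSup_le_csSup
  · -- BddAbove of the RHS set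
    refine ⟨1, ?_⟩
    rintro c ⟨w, hlip, hbd, rfl⟩
    have hsum : ∑ t, (r t - y t) * w (r t) ≤ (T:ℝ) := by
      calc ∑ t, (r t - y t) * w (r t) ≤ ∑ _t : Fin T, (1:ℝ) := by
            apply Finset.sum_le_sum
            intro t _
            have h1 : |(r t - y t) * w (r t)| ≤ 1 := by
              rw [abs_mul]
              have hrt := hr t
              have hwt := hbd (r t) hrt
              have h2 : |r t - y t| ≤ 1 := by
                rcases hy t with h | h <;> rw [h] <;> rw [abs_le] <;>
                  constructor <;> simp at hrt ⊢ <;> linarith [hrt.1, hrt.2]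
              have h3 : |w (r t)| ≤ 1 := abs_le.mpr ⟨hwt.1, hwt.2⟩
              calc |r t - y t| * |w (r t)| ≤ 1 * 1 :=
                    mul_le_mul h2 h3 (abs_nonneg _) (by norm_num)
                _ = 1 := by ring
            linarith [(abs_le.mp h1).2]
        _ = (T:ℝ) := by simp
    rw [div_mul_eq_mul_div, one_mul, div_le_one hTpos]
    exact hsum
  · -- Nonempty of the LHS set
    refine ⟨0, fun _ => 0, ?_, ?_, ?_⟩
    · exact ((LipschitzWith.const 0).weaken (by norm_num)).lipschitzOnWith
    · intro x _; constructor <;> norm_num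
    · simp
  · -- subset
    rintro c ⟨w, hlip, hbd, rfl⟩
    have hrbar_mem : rbar ∈ Set.Icc (0:ℝ) 1 := by
      constructor
      · apply mul_nonneg (by positivity)
        exact Finset.sum_nonneg fun t _ => (hr t).1
      · rw [hrbar, div_mul_eq_mul_div, one_mul, div_le_one hTpos]
        calc ∑ t, r t ≤ ∑ _t : Fin T, (1:ℝ) :=
              Finset.sum_le_sum fun t _ => (hr t).2
          _ = (T:ℝ) := by simp
    refine ⟨fun _ => w rbar, ((LipschitzWith.const _).weaken (by norm_num)).lipschitzOnWith,
      fun x _ => hbd rbar hrbar_mem, ?_⟩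
    have key : ∑ t, (rbar - y t) * w rbar = ∑ t, (r t - y t) * w rbar := by
      rw [Finset.sum_congr rfl (fun t _ => sub_mul (rbar) (y t) (w rbar)),
        Finset.sum_congr rfl (fun t _ => sub_mul (r t) (y t) (w rbar)),
        Finset.sum_sub_distrib, Finset.sum_sub_distrib]
      congr 1
      rw [← Finset.sum_mul, ← Finset.sum_mul]
      congr 1
      simp only [Finset.sum_const, Finset.card_univ, Fintype.card_fin, nsmul_eq_mul, hrbar]
      field_simp
      rw [Finset.sum_mul]
      exact Finset.sum_congr rfl fun _ _ => mul_comm _ _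
    rw [key]

end
end

section
/- Let α ≥ 1 and let J be a probability distribution of (v,y) ∈ [0,1] × {0,1}. Let J̄ be the distribution of (v̄, y) where (v,y) ~ J and v̄ := E_J[v] is deterministic. Then ℓα-ECE(J̄) ≤ ℓα-ECE(J), where ℓα-ECE(J) := E_J[ |v − E_J[y | v]|^α ]. -/
open MeasureTheory Finset

noncomputable section

/-- The σ-algebra generated by the prediction (the first coordinate). -/
def predSigma : MeasurableSpace (ℝ × ℝ) :=
  MeasurableSpace.comap Prod.fst inferInstance

/-- The ℓα expected calibration error: `E[ |v - E[y | v]|^α ]`, where `E[y | v]` is the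
conditional expectation of the state given the prediction. -/
def lECE (α : ℝ) (mu : Measure (ℝ × ℝ)) : ℝ :=
  ∫ x, |x.1 - (mu[(fun z : ℝ × ℝ => z.2)|predSigma]) x| ^ α ∂mu

/-- Replacing all predictions by their overall mean never increases the ℓα expected
calibration error. -/
theorem lECE_avg_le (α : ℝ) (hα : 1 ≤ α) (mu : Measure (ℝ × ℝ)) [IsProbabilityMeasure mu]
    (hsupp : ∀ᵐ x ∂mu, x.1 ∈ Set.Icc (0:ℝ) 1 ∧ (x.2 = 0 ∨ x.2 = 1)) :
    lECE α (mu.map (fun x => ((∫ z, z.1 ∂mu), x.2))) ≤ lECE α mu := by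
  have hα0 : (0:ℝ) ≤ α := le_trans zero_le_one hα
  set c : ℝ := ∫ z, z.1 ∂mu with hc
  set r : ℝ := ∫ z, (z : ℝ × ℝ).2 ∂mu with hr
  have hm : predSigma ≤ (inferInstance : MeasurableSpace (ℝ × ℝ)) :=
    measurable_fst.comap_le
  haveI : SigmaFinite (mu.trim hm) := by
    have : IsFiniteMeasure (mu.trim hm) := isFiniteMeasure_trim hm
    infer_instance
  have hF : Measurable (fun x : ℝ × ℝ => ((c : ℝ), x.2)) :=
    measurable_const.prodMk measurable_snd
  set ν : Measure (ℝ × ℝ) := mu.map (fun x => ((c : ℝ), x.2)) with hν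
  haveI : IsProbabilityMeasure ν := Measure.isProbabilityMeasure_map hF.aemeasurable
  haveI : SigmaFinite (ν.trim hm) := by
    have : IsFiniteMeasure (ν.trim hm) := isFiniteMeasure_trim hm
    infer_instance
  -- integrability facts
  have hy01 : ∀ᵐ x ∂mu, (x : ℝ × ℝ).2 = 0 ∨ x.2 = 1 := hsupp.mono fun x hx => hx.2
  have hx01 : ∀ᵐ x ∂mu, (x : ℝ × ℝ).1 ∈ Set.Icc (0:ℝ) 1 := hsupp.mono fun x hx => hx.1
  have hsnd_int : Integrable (fun z : ℝ × ℝ => z.2) mu := by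
    refine Integrable.mono' (integrable_const 1) measurable_snd.aestronglyMeasurable ?_
    filter_upwards [hy01] with x hx
    rcases hx with h | h <;> simp [h]
  have hfst_int : Integrable (fun z : ℝ × ℝ => z.1) mu := by
    refine Integrable.mono' (integrable_const 1) measurable_fst.aestronglyMeasurable ?_
    filter_upwards [hx01] with x hx
    rw [Real.norm_eq_abs, abs_le]
    exact ⟨by linarith [hx.1], hx.2⟩
  set g : ℝ × ℝ → ℝ := mu[(fun z : ℝ × ℝ => z.2)|predSigma] with hg
  have hg0 : ∀ᵐ x ∂mu, 0 ≤ g x :=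
    condExp_nonneg (hy01.mono fun x hx => by rcases hx with h | h <;> simp [h])
  have hg1 : ∀ᵐ x ∂mu, g x ≤ 1 := by
    have h1 : (fun z : ℝ × ℝ => z.2) ≤ᵐ[mu] fun _ => (1:ℝ) :=
      hy01.mono fun x hx => by rcases hx with h | h <;> simp [h]
    have := condExp_mono (m := predSigma) hsnd_int (integrable_const 1) h1
    rw [condExp_const hm] at this
    exact this
  set h : ℝ × ℝ → ℝ := fun x => x.1 - g x with hh
  have hg_meas : AEStronglyMeasurable g mu :=
    (stronglyMeasurable_condExp.mono hm).aestronglyMeasurable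
  have hh_meas : AEStronglyMeasurable h mu :=
    measurable_fst.aestronglyMeasurable.sub hg_meas
  have hh_int : Integrable h mu := hfst_int.sub integrable_condExp
  have habs1 : ∀ᵐ x ∂mu, |h x| ≤ 1 := by
    filter_upwards [hx01, hg0, hg1] with x h1 h2 h3
    rw [abs_le]
    constructor <;> simp only [hh] <;> [linarith [h1.1]; linarith [h1.2]]
  have hhα_int : Integrable (fun x => |h x| ^ α) mu := by
    have hcont : Continuous fun t : ℝ => |t| ^ α := by
      refine continuous_iff_continuousAt.mpr fun t => ?_
      exact (Real.continuousAt_rpow_const (|t|) α (Or.inr (by linarith))).comp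
        continuous_abs.continuousAt
    refine Integrable.mono' (integrable_const 1)
      (hcont.comp_aestronglyMeasurable hh_meas) ?_
    filter_upwards [habs1] with x hx
    rw [Real.norm_eq_abs, abs_of_nonneg (Real.rpow_nonneg (abs_nonneg _) _)]
    exact Real.rpow_le_one (abs_nonneg _) hx hα0
  -- Jensen
  have jensen : (∫ x, |h x| ∂mu) ^ α ≤ ∫ x, |h x| ^ α ∂mu := by
    have := (convexOn_rpow hα).map_integral_le (f := fun x => |h x|)
      (fun x hx => (Real.continuousAt_rpow_const x α (Or.inr (by linarith))).continuousWithinAt)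
      isClosed_Ici (Filter.Eventually.of_forall fun x => Set.mem_Ici.mpr (abs_nonneg _))
      hh_int.abs (by exact hhα_int)
    simpa using this
  have hinth : ∫ x, h x ∂mu = c - r := by
    rw [integral_sub hfst_int integrable_condExp, integral_condExp hm]
  have key : |c - r| ^ α ≤ ∫ x, |h x| ^ α ∂mu := by
    refine le_trans ?_ jensen
    refine Real.rpow_le_rpow (abs_nonneg _) ?_ hα0
    rw [← hinth]
    have := norm_integral_le_integral_norm (μ := mu) h
    simpa [Real.norm_eq_abs] using this
  -- now compute lECE of ν
  have hsnd_int_ν : Integrable (fun z : ℝ × ℝ => z.2) ν := by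
    rw [hν, integrable_map_measure measurable_snd.aestronglyMeasurable hF.aemeasurable]
    exact hsnd_int
  have hrν : ∫ z, (z : ℝ × ℝ).2 ∂ν = r := by
    rw [hν, integral_map hF.aemeasurable measurable_snd.aestronglyMeasurable]
  have hGr : (fun _ : ℝ × ℝ => r) =ᵐ[ν] ν[(fun z : ℝ × ℝ => z.2)|predSigma] := by
    refine ae_eq_condExp_of_forall_setIntegral_eq hm hsnd_int_ν
      (fun s _ _ => (integrable_const r).integrableOn) (fun s hs _ => ?_)
      (stronglyMeasurable_const.aestronglyMeasurable)
    obtain ⟨B, hB, rfl⟩ := hs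
    have hsm : MeasurableSet (Prod.fst ⁻¹' B : Set (ℝ × ℝ)) := hm _ ⟨B, hB, rfl⟩
    by_cases hcB : c ∈ B
    · have hae : ∀ᵐ x ∂ν, x ∈ (Prod.fst ⁻¹' B : Set (ℝ × ℝ)) := by
        exact (ae_map_iff hF.aemeasurable hsm).mpr (Filter.Eventually.of_forall fun x => hcB)
      have h1 : ν (Prod.fst ⁻¹' B) = 1 := by
        have := ae_iff.mp hae
        have h2 : ν ((Prod.fst ⁻¹' B : Set (ℝ × ℝ))ᶜ) = 0 := by
          exact this
        have := prob_compl_eq_zero_iff hsm |>.mp h2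
        exact this
      rw [setIntegral_const, measureReal_def, h1]
      simp only [ENNReal.toReal_one, one_smul]
      rw [← hrν, ← integral_indicator hsm]
      refine integral_congr_ae ?_
      filter_upwards [hae] with x hx
      rw [Set.indicator_of_mem hx]
    · have h0 : ν (Prod.fst ⁻¹' B) = 0 := by
        rw [hν, Measure.map_apply hF hsm]
        have : (fun x : ℝ × ℝ => ((c : ℝ), x.2)) ⁻¹' (Prod.fst ⁻¹' B) = ∅ := by
          ext x; simp [hcB]
        rw [this]; simp
      rw [show ν.restrict (Prod.fst ⁻¹' B) = 0 from Measure.restrict_eq_zero.mpr h0]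
      simp
  have hfst_ae : ∀ᵐ x ∂ν, (x : ℝ × ℝ).1 = c := by
    have hms : MeasurableSet {x : ℝ × ℝ | x.1 = c} :=
      measurable_fst (measurableSet_singleton c)
    exact (ae_map_iff hF.aemeasurable hms).mpr (Filter.Eventually.of_forall fun x => rfl)
  have hlece : lECE α ν = |c - r| ^ α := by
    rw [lECE]
    rw [show (∫ x, |x.1 - (ν[(fun z : ℝ × ℝ => z.2)|predSigma]) x| ^ α ∂ν)
        = ∫ _x, |c - r| ^ α ∂ν from ?_]
    · simp
    refine integral_congr_ae ?_
    filter_upwards [hfst_ae, hGr] with x h1 h2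
    rw [h1, ← h2]
  calc lECE α ν = |c - r| ^ α := hlece
    _ ≤ ∫ x, |h x| ^ α ∂mu := key
    _ = lECE α mu := rfl
end
end
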